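/- There exists a constant C > 0 such that for every real B ≥ 1 one has |N(B) − 16·N₁(B)| ≤ C·B, where N(B) denotes the number of vectors (x₀,x₁,x₂,x₃,x₄) ∈ ℤ^5 with gcd(x₀,x₁,x₂,x₃,x₄) = 1, x₀x₁ = x₂x₃, x₀² + x₁² + x₂² − x₃² − 2x₄² = 0, max{|x₀|,|x₁|,|x₂|,|x₃|, √(2/3)·|x₄|} ≤ B, and with unordered pair {|x₀|,|x₁|} different from {|x₂|,|x₃|}. -/

import Mathlib

open scoped Classical

/-- The counting function `N(B)` of primitive integer points of height at most `B`. -/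
noncomputable def NcountU (B : ℝ) : ℕ :=
  Set.ncard {x : ℤ × ℤ × ℤ × ℤ × ℤ |
    Int.gcd x.1 (Int.gcd x.2.1 (Int.gcd x.2.2.1 (Int.gcd x.2.2.2.1 x.2.2.2.2))) = 1 ∧
    x.1 * x.2.1 = x.2.2.1 * x.2.2.2.1 ∧
    x.1 ^ 2 + x.2.1 ^ 2 + x.2.2.1 ^ 2 - x.2.2.2.1 ^ 2 - 2 * x.2.2.2.2 ^ 2 = 0 ∧
    (|x.1| : ℝ) ≤ B ∧ (|x.2.1| : ℝ) ≤ B ∧ (|x.2.2.1| : ℝ) ≤ B ∧ (|x.2.2.2.1| : ℝ) ≤ B ∧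
      Real.sqrt (2 / 3) * (|x.2.2.2.2| : ℝ) ≤ B ∧
    ({|x.1|, |x.2.1|} : Set ℤ) ≠ ({|x.2.2.1|, |x.2.2.2.1|} : Set ℤ)}

/-- The counting function `N₁(B)`: quintuples of positive integers with
`gcd(x₀,x₁,x₂,x₃) = 1`, `max{x₀,x₁,x₂,x₃} ≤ B`, `x₀x₁ = x₂x₃`,
`x₀² + x₁² + x₂² − x₃² − 2x₄² = 0` and `{x₀,x₁} ≠ {x₂,x₃}`. -/
noncomputable def None (B : ℝ) : ℕ :=
  Set.ncard {x : ℤ × ℤ × ℤ × ℤ × ℤ |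
    0 < x.1 ∧ 0 < x.2.1 ∧ 0 < x.2.2.1 ∧ 0 < x.2.2.2.1 ∧ 0 < x.2.2.2.2 ∧
    Int.gcd x.1 (Int.gcd x.2.1 (Int.gcd x.2.2.1 x.2.2.2.1)) = 1 ∧
    (x.1 : ℝ) ≤ B ∧ (x.2.1 : ℝ) ≤ B ∧ (x.2.2.1 : ℝ) ≤ B ∧ (x.2.2.2.1 : ℝ) ≤ B ∧
    x.1 * x.2.1 = x.2.2.1 * x.2.2.2.1 ∧
    x.1 ^ 2 + x.2.1 ^ 2 + x.2.2.1 ^ 2 - x.2.2.2.1 ^ 2 - 2 * x.2.2.2.2 ^ 2 = 0 ∧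
    ({x.1, x.2.1} : Set ℤ) ≠ ({x.2.2.1, x.2.2.2.1} : Set ℤ)}

namespace NNN


lemma ncard_prod {α β : Type*} (s : Set α) (t : Set β) :
    (s ×ˢ t).ncard = s.ncard * t.ncard := by
  rw [← Nat.card_coe_set_eq, ← Nat.card_coe_set_eq, ← Nat.card_coe_set_eq,
    ← Nat.card_prod]
  exact Nat.card_congr (Equiv.Set.prod s t)

lemma natAbs_le_iff {x : ℤ} {M : ℕ} : x.natAbs ≤ M ↔ -(M:ℤ) ≤ x ∧ x ≤ M := by
  rw [← abs_le, Int.abs_eq_natAbs]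
  exact_mod_cast Iff.rfl

/-- Generic box-counting: if `f` is injective on `s` and lands in a box of radius `M`
    times a finite set of `k` labels, then `s` has at most `(2M+1)^2 * k` elements. -/
lemma ncard_le_box {α : Type*} (s : Set α) (M : ℕ) {L : Type*} [Fintype L] [DecidableEq L]
    (f : α → ℤ × ℤ × L)
    (hinj : Set.InjOn f s)
    (hb : ∀ x ∈ s, (f x).1.natAbs ≤ M ∧ (f x).2.1.natAbs ≤ M) :
    s.ncard ≤ (2 * M + 1) ^ 2 * Fintype.card L := by
  classical
  have h1 : s.ncard = (f '' s).ncard := (Set.ncard_image_of_injOn hinj).symm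
  set T : Finset (ℤ × ℤ × L) :=
    (Finset.Icc (-(M:ℤ)) M) ×ˢ (Finset.Icc (-(M:ℤ)) M) ×ˢ (Finset.univ : Finset L)
  have hsub : f '' s ⊆ ↑T := by
    rintro _ ⟨x, hx, rfl⟩
    obtain ⟨h1', h2'⟩ := hb x hx
    simp only [T, Finset.coe_product, Set.mem_prod, Finset.mem_coe, Finset.mem_Icc,
      Finset.mem_univ, and_true]
    exact ⟨natAbs_le_iff.mp h1', natAbs_le_iff.mp h2'⟩
  have h2 : (f '' s).ncard ≤ T.card := by
    have := Set.ncard_le_ncard hsub (T.finite_toSet)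
    simpa [Set.ncard_coe_finset] using this
  have hT : T.card = (2 * M + 1) ^ 2 * Fintype.card L := by
    simp only [T, Finset.card_product, Int.card_Icc, Finset.card_univ]
    have : ((M:ℤ) + 1 - -(M:ℤ)).toNat = 2 * M + 1 := by omega
    rw [this]; ring
  omega


lemma nat_eq_one_of_sq_dvd_two {q : ℕ} (h : q ^ 2 ∣ 2) : q = 1 := by
  have h2 : q ^ 2 ≤ 2 := Nat.le_of_dvd (by norm_num) h
  have h0 : q ≠ 0 := by rintro rfl; simp at h
  nlinarith [h2, Nat.one_le_iff_ne_zero.mpr h0]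

lemma coprime_of_sq_dvd_two_mul_sq {q : ℕ} {e : ℤ}
    (hqe : Nat.Coprime q e.natAbs) (h : ((q : ℤ)) ^ 2 ∣ 2 * e ^ 2) : q = 1 := by
  have hc : IsCoprime (q : ℤ) e := Int.isCoprime_iff_gcd_eq_one.mpr (by
    simpa [Int.gcd, Int.natAbs_natCast] using hqe)
  have hc2 : IsCoprime ((q:ℤ) ^ 2) (e ^ 2) := (hc.pow : _)
  have h2 : ((q:ℤ)) ^ 2 ∣ 2 := hc2.dvd_of_dvd_mul_right h
  have hn : q ^ 2 ∣ 2 := by exact_mod_cast h2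
  exact nat_eq_one_of_sq_dvd_two hn

/-- From gcd(b, gcd(d,e)) = 1 and b² - d² (or b² + d²) = 2e² style dvd, gcd(b,d)=1. -/
lemma gcd_pair_eq_one {b d e : ℤ} (hgcd : Int.gcd b (Int.gcd d e) = 1)
    (h2 : ((Int.gcd b d : ℤ)) ^ 2 ∣ 2 * e ^ 2) : Int.gcd b d = 1 := by
  set q := Int.gcd b d with hqdef
  have hqb : (q : ℤ) ∣ b := (Int.gcd_dvd_left _ _)
  have hqd : (q : ℤ) ∣ d := (Int.gcd_dvd_right _ _)
  apply coprime_of_sq_dvd_two_mul_sq (e := e) _ h2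
  -- Nat.Coprime q e.natAbs
  have h1 : (Nat.gcd q e.natAbs : ℤ) ∣ b :=
    dvd_trans (by exact_mod_cast Nat.gcd_dvd_left q e.natAbs) hqb
  have h1' : (Nat.gcd q e.natAbs : ℤ) ∣ d :=
    dvd_trans (by exact_mod_cast Nat.gcd_dvd_left q e.natAbs) hqd
  have h3 : (Nat.gcd q e.natAbs : ℤ) ∣ e := by
    have : (Nat.gcd q e.natAbs : ℤ) ∣ (e.natAbs : ℤ) := by
      exact_mod_cast Nat.gcd_dvd_right q e.natAbs
    simpa [Int.natAbs_dvd] using this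
  have hd1 : (Nat.gcd q e.natAbs : ℤ) ∣ ((Int.gcd b (Int.gcd d e) : ℕ) : ℤ) :=
    Int.dvd_coe_gcd h1 (Int.dvd_coe_gcd h1' h3)
  rw [hgcd] at hd1
  exact Nat.dvd_one.mp (by exact_mod_cast hd1)

lemma isCoprime_of_sum_diff {σ τ b d : ℤ} (hb : b = σ + τ) (hd : d = σ - τ)
    (h : Int.gcd b d = 1) : IsCoprime σ τ := by
  rw [Int.isCoprime_iff_gcd_eq_one]
  have h1 : (Int.gcd σ τ : ℤ) ∣ b := by
    rw [hb]; exact dvd_add (Int.gcd_dvd_left _ _) (Int.gcd_dvd_right _ _)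
  have h2 : (Int.gcd σ τ : ℤ) ∣ d := by
    rw [hd]; exact dvd_sub (Int.gcd_dvd_left _ _) (Int.gcd_dvd_right _ _)
  have := Int.dvd_coe_gcd h1 h2
  rw [h] at this
  exact_mod_cast Nat.dvd_one.mp (by exact_mod_cast this)

lemma natAbs_sq_of_pm {x u : ℤ} (h : x = u ^ 2 ∨ x = -u ^ 2) :
    x.natAbs = Nat.sqrt x.natAbs ^ 2 := by
  have hx : x.natAbs = u.natAbs ^ 2 := by
    rcases h with h | h <;> subst h <;> simp [Int.natAbs_pow]
  rw [hx, Nat.sqrt_eq' u.natAbs]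

def THyp (B : ℝ) : Set (ℤ × ℤ × ℤ) :=
  {p | Int.gcd p.1 (Int.gcd p.2.1 p.2.2) = 1 ∧
       p.1 ^ 2 - p.2.1 ^ 2 - 2 * p.2.2 ^ 2 = 0 ∧
       p.1.natAbs ≠ p.2.1.natAbs ∧
       (p.1.natAbs : ℝ) ≤ B ∧ (p.2.1.natAbs : ℝ) ≤ B}

noncomputable def FH : ℤ × ℤ × ℤ → ℤ × ℤ × (Bool × Bool × Bool × Bool) := fun p =>
  let σ := (p.1 + p.2.1) / 2
  let τ := (p.1 - p.2.1) / 2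
  if Even σ then
    ((Nat.sqrt (σ / 2).natAbs : ℤ), (Nat.sqrt τ.natAbs : ℤ),
      (true, decide (0 ≤ σ), decide (0 ≤ τ), decide (0 ≤ p.2.2)))
  else
    ((Nat.sqrt σ.natAbs : ℤ), (Nat.sqrt (τ / 2).natAbs : ℤ),
      (false, decide (0 ≤ σ), decide (0 ≤ τ), decide (0 ≤ p.2.2)))

lemma thyp_facts {B : ℝ} {p : ℤ × ℤ × ℤ} (hp : p ∈ THyp B) :
    ∃ σ τ : ℤ,
      p.1 = σ + τ ∧ p.2.1 = σ - τ ∧ (p.1 + p.2.1) / 2 = σ ∧ (p.1 - p.2.1) / 2 = τ ∧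
      2 * (σ * τ) = p.2.2 ^ 2 ∧
      (Even σ → (σ / 2).natAbs = Nat.sqrt (σ / 2).natAbs ^ 2 ∧
        τ.natAbs = Nat.sqrt τ.natAbs ^ 2) ∧
      (¬ Even σ → σ.natAbs = Nat.sqrt σ.natAbs ^ 2 ∧
        (τ / 2).natAbs = Nat.sqrt (τ / 2).natAbs ^ 2) := by
  obtain ⟨b, d, e⟩ := p
  obtain ⟨hgcd, heq, hne, hbB, hdB⟩ := hp
  simp only at hgcd heq hne hbB hdB ⊢
  have hq : Int.gcd b d = 1 := by
    apply gcd_pair_eq_one hgcd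
    have h1 : (Int.gcd b d : ℤ) ∣ b := (Int.gcd_dvd_left _ _)
    have h2 : (Int.gcd b d : ℤ) ∣ d := (Int.gcd_dvd_right _ _)
    have : ((Int.gcd b d : ℤ)) ^ 2 ∣ b ^ 2 - d ^ 2 := by
      exact dvd_sub (pow_dvd_pow_of_dvd h1 2) (pow_dvd_pow_of_dvd h2 2)
    have heq2 : b ^ 2 - d ^ 2 = 2 * e ^ 2 := by linarith
    rwa [heq2] at this
  have hcop : IsCoprime b d := Int.isCoprime_iff_gcd_eq_one.mpr hq
  -- b, d both odd
  have hbodd : Odd b ∧ Odd d := by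
    rcases Int.even_or_odd b with hb | hb <;> rcases Int.even_or_odd d with hd | hd
    · exfalso
      have h2 : IsUnit (2 : ℤ) := hcop.isUnit_of_dvd' hb.two_dvd hd.two_dvd
      rw [Int.isUnit_iff] at h2; omega
    · exfalso
      obtain ⟨k, hk⟩ := hb; obtain ⟨l, hl⟩ := hd
      have h1 : b ^ 2 = 4 * k ^ 2 := by rw [hk]; ring
      have h2 : d ^ 2 = 4 * l ^ 2 + 4 * l + 1 := by rw [hl]; ring
      rw [h1, h2] at heq
      have h3 : (4 : ℤ) * k ^ 2 - (4 * l ^ 2 + 4 * l + 1) - 2 * e ^ 2 = 0 := by linarith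
      generalize k ^ 2 = K at h3; generalize l ^ 2 = L at h3; generalize e ^ 2 = E at h3
      omega
    · exfalso
      obtain ⟨k, hk⟩ := hb; obtain ⟨l, hl⟩ := hd
      have h1 : b ^ 2 = 4 * k ^ 2 + 4 * k + 1 := by rw [hk]; ring
      have h2 : d ^ 2 = 4 * l ^ 2 := by rw [hl]; ring
      rw [h1, h2] at heq
      have h3 : (4 : ℤ) * k ^ 2 + 4 * k + 1 - 4 * l ^ 2 - 2 * e ^ 2 = 0 := by linarith
      generalize k ^ 2 = K at h3; generalize l ^ 2 = L at h3; generalize e ^ 2 = E at h3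
      omega
    · exact ⟨hb, hd⟩
  obtain ⟨⟨k, hk⟩, ⟨l, hl⟩⟩ := hbodd
  set σ := k + l + 1 with hσdef
  set τ := k - l with hτdef
  have hb' : b = σ + τ := by omega
  have hd' : d = σ - τ := by omega
  have h2στ : 2 * (σ * τ) = e ^ 2 := by
    have : b ^ 2 - d ^ 2 = 2 * (2 * (σ * τ)) := by rw [hb', hd']; ring
    linarith
  have hcopστ : IsCoprime σ τ := isCoprime_of_sum_diff hb' hd' hq
  have heeven : Even e := by
    rcases Int.even_or_odd e with he | he
    · exact he
    · exfalso
      obtain ⟨j, hj⟩ := he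
      have h5 : 2 * (σ * τ) = 4 * j ^ 2 + 4 * j + 1 := by rw [h2στ, hj]; ring
      generalize σ * τ = S at h5; generalize j ^ 2 = J at h5
      omega
  obtain ⟨f, hf⟩ := heeven
  have hστ : σ * τ = 2 * f ^ 2 := by
    have : e ^ 2 = 2 * (2 * f ^ 2) := by rw [hf]; ring
    linarith
  refine ⟨σ, τ, hb', hd', by omega, by omega, h2στ, ?_, ?_⟩
  · -- Even σ case
    intro hcase
    obtain ⟨t, ht⟩ := hcase
    have hσ' : σ = 2 * t := by omega
    have hdiv : σ / 2 = t := by omega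
    have hprod : t * τ = f ^ 2 := by
      have : 2 * (t * τ) = 2 * (2 * f ^ 2) / 2 * 1 := by
        rw [← hστ, hσ']; ring_nf; omega
      omega
    have hcop1 : IsCoprime t τ :=
      IsCoprime.of_isCoprime_of_dvd_left hcopστ ⟨2, by omega⟩
    have h1 := Int.sq_of_isCoprime hcop1 hprod
    have h2 := Int.sq_of_isCoprime hcop1.symm (by rw [mul_comm]; exact hprod)
    obtain ⟨u, hu⟩ := h1
    obtain ⟨v, hv⟩ := h2
    rw [hdiv]
    exact ⟨natAbs_sq_of_pm hu, natAbs_sq_of_pm hv⟩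
  · -- Odd σ case
    intro hcase
    have hτeven : Even τ := by
      rcases Int.even_or_odd τ with h | h
      · exact h
      · exfalso
        apply hcase
        have : Even (σ * τ) := ⟨f ^ 2, by omega⟩
        rcases Int.even_mul.mp this with h' | h'
        · exact h'
        · exact (Int.not_even_iff_odd.mpr h h').elim
    obtain ⟨t, ht⟩ := hτeven
    have hτ' : τ = 2 * t := by omega
    have hdiv : τ / 2 = t := by omega
    have hprod : σ * t = f ^ 2 := by
      have h5 : σ * (2 * t) = 2 * f ^ 2 := by rw [← hτ']; exact hστ
      have : 2 * (σ * t) = 2 * f ^ 2 := by linarith [h5]; 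
      omega
    have hcop1 : IsCoprime σ t :=
      IsCoprime.of_isCoprime_of_dvd_right hcopστ ⟨2, by omega⟩
    have h1 := Int.sq_of_isCoprime hcop1 hprod
    have h2 := Int.sq_of_isCoprime hcop1.symm (by rw [mul_comm]; exact hprod)
    obtain ⟨u, hu⟩ := h1
    obtain ⟨v, hv⟩ := h2
    rw [hdiv]
    exact ⟨natAbs_sq_of_pm hu, natAbs_sq_of_pm hv⟩


lemma sqrt_le_floor_sqrt {w : ℕ} {B : ℝ} (hB : 1 ≤ B) (h : (w : ℝ) ≤ 2 * B) :
    Nat.sqrt w ≤ ⌊Real.sqrt (2 * B)⌋₊ := by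
  apply Nat.le_floor
  have h1 : ((Nat.sqrt w : ℕ) : ℝ) ^ 2 ≤ (w : ℝ) := by exact_mod_cast Nat.sqrt_le' w
  rw [Real.le_sqrt (by positivity) (by nlinarith)]
  linarith

lemma two_natAbs_le {b d σ : ℤ} (h : b + d = 2 * σ) :
    2 * σ.natAbs ≤ b.natAbs + d.natAbs := by omega

lemma fh_bounds {B : ℝ} (hB : 1 ≤ B) {p : ℤ × ℤ × ℤ} (hp : p ∈ THyp B) :
    (FH p).1.natAbs ≤ ⌊Real.sqrt (2 * B)⌋₊ ∧ (FH p).2.1.natAbs ≤ ⌊Real.sqrt (2 * B)⌋₊ := by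
  obtain ⟨σ, τ, hb, hd, hs, ht, he, hsq, hsq'⟩ := thyp_facts hp
  obtain ⟨hgcd, heq, hne, hbB, hdB⟩ := hp
  have hσa : ((σ.natAbs : ℕ) : ℝ) ≤ 2 * B := by
    have h1 : 2 * σ.natAbs ≤ p.1.natAbs + p.2.1.natAbs := by omega
    have h2 : ((2 * σ.natAbs : ℕ) : ℝ) ≤ (p.1.natAbs : ℝ) + (p.2.1.natAbs : ℝ) := by
      exact_mod_cast h1
    push_cast at h2 ⊢
    linarith
  have hτa : ((τ.natAbs : ℕ) : ℝ) ≤ 2 * B := by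
    have h1 : 2 * τ.natAbs ≤ p.1.natAbs + p.2.1.natAbs := by omega
    have h2 : ((2 * τ.natAbs : ℕ) : ℝ) ≤ (p.1.natAbs : ℝ) + (p.2.1.natAbs : ℝ) := by
      exact_mod_cast h1
    push_cast at h2 ⊢
    linarith
  have hσa' : (((σ / 2).natAbs : ℕ) : ℝ) ≤ 2 * B := by
    have : (σ / 2).natAbs ≤ σ.natAbs := by omega
    have := (Nat.cast_le (α := ℝ)).mpr this
    linarith
  have hτa' : (((τ / 2).natAbs : ℕ) : ℝ) ≤ 2 * B := by
    have : (τ / 2).natAbs ≤ τ.natAbs := by omega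
    have := (Nat.cast_le (α := ℝ)).mpr this
    linarith
  unfold FH
  simp only [hs, ht]
  by_cases hc : Even σ <;> simp only [hc, if_true, if_false, Int.natAbs_natCast] <;>
    constructor <;>
    first
      | simpa using sqrt_le_floor_sqrt hB hσa'
      | simpa using sqrt_le_floor_sqrt hB hτa
      | simpa using sqrt_le_floor_sqrt hB hσa
      | simpa using sqrt_le_floor_sqrt hB hτa'

lemma fh_inj (B : ℝ) : Set.InjOn FH (THyp B) := by
  intro p hp q hq h
  obtain ⟨σ₁, τ₁, hb₁, hd₁, hs₁, ht₁, he₁, hsq₁, hsq₁'⟩ := thyp_facts hp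
  obtain ⟨σ₂, τ₂, hb₂, hd₂, hs₂, ht₂, he₂, hsq₂, hsq₂'⟩ := thyp_facts hq
  unfold FH at h
  simp only [hs₁, ht₁, hs₂, ht₂] at h
  by_cases hc₁ : Even σ₁ <;> by_cases hc₂ : Even σ₂ <;>
    simp only [hc₁, hc₂, if_true, if_false, Prod.mk.injEq, Nat.cast_inj,
      decide_eq_decide] at h
  · -- both even
    obtain ⟨h1, h2, -, h4, h5, h6⟩ := h
    obtain ⟨hq1, hq2⟩ := hsq₁ hc₁
    obtain ⟨hp1, hp2⟩ := hsq₂ hc₂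
    have hσ : σ₁ = σ₂ := by
      have e1 : (σ₁ / 2).natAbs = (σ₂ / 2).natAbs := by rw [hq1, hp1, h1]
      have o1 : σ₁ % 2 = 0 := Int.even_iff.mp hc₁
      have o2 : σ₂ % 2 = 0 := Int.even_iff.mp hc₂
      omega
    have hτ : τ₁ = τ₂ := by
      have e1 : τ₁.natAbs = τ₂.natAbs := by rw [hq2, hp2, h2]
      omega
    have he : p.2.2 = q.2.2 := by
      have e2 : p.2.2 ^ 2 = q.2.2 ^ 2 := by rw [← he₁, ← he₂, hσ, hτ]
      have e3 : p.2.2.natAbs ^ 2 = q.2.2.natAbs ^ 2 := by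
        have := congrArg Int.natAbs e2
        simpa [Int.natAbs_pow] using this
      have e4 : p.2.2.natAbs = q.2.2.natAbs := Nat.pow_left_injective (by norm_num) e3
      omega
    have : p.1 = q.1 := by rw [hb₁, hb₂, hσ, hτ]
    have : p.2.1 = q.2.1 := by rw [hd₁, hd₂, hσ, hτ]
    exact Prod.ext ‹p.1 = q.1› (Prod.ext ‹p.2.1 = q.2.1› he)
  · exact absurd h.2.2.1 (by simp)
  · exact absurd h.2.2.1 (by simp)
  · -- both odd
    obtain ⟨h1, h2, -, h4, h5, h6⟩ := h
    obtain ⟨hq1, hq2⟩ := hsq₁' hc₁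
    obtain ⟨hp1, hp2⟩ := hsq₂' hc₂
    have hσ : σ₁ = σ₂ := by
      have e1 : σ₁.natAbs = σ₂.natAbs := by rw [hq1, hp1, h1]
      omega
    have hτ : τ₁ = τ₂ := by
      have e1 : (τ₁ / 2).natAbs = (τ₂ / 2).natAbs := by rw [hq2, hp2, h2]
      have o1 : τ₁ % 2 = 0 := by
        have : Even τ₁ := by
          rcases Int.even_or_odd τ₁ with h | h
          · exact h
          · exfalso
            apply hc₁
            have hev : Even (p.2.2 ^ 2) := by
              rw [← he₁]; exact ⟨σ₁ * τ₁, by ring⟩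
            have : Even (σ₁ * τ₁ * 2) := ⟨σ₁ * τ₁, by ring⟩
            -- σ₁ odd * τ₁ odd = odd; but 2στ = e², so e even, e² = 4..., στ even: contradiction
            -- simpler: 2*(σ₁*τ₁) = e²; e even (since e² even); then στ even; odd*odd=odd contra
            have heven : Even p.2.2 := by
              rcases Int.even_or_odd p.2.2 with h' | h'
              · exact h'
              · exfalso
                obtain ⟨j, hj⟩ := h'
                have : 2 * (σ₁ * τ₁) = 4 * j ^ 2 + 4 * j + 1 := by rw [he₁, hj]; ring
                generalize σ₁ * τ₁ = S at this; generalize j ^ 2 = J at this; omega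
            obtain ⟨f, hf⟩ := heven
            have hστf : σ₁ * τ₁ = 2 * f ^ 2 := by
              have : p.2.2 ^ 2 = 2 * (2 * f ^ 2) := by rw [hf]; ring
              linarith [he₁]
            have : Even (σ₁ * τ₁) := ⟨f ^ 2, by omega⟩
            rcases Int.even_mul.mp this with h'' | h''
            · exact h''
            · exact (Int.not_even_iff_odd.mpr h h'').elim
        exact Int.even_iff.mp this
      have o2 : τ₂ % 2 = 0 := by
        have : Even τ₂ := by
          rcases Int.even_or_odd τ₂ with h | h
          · exact h
          · exfalso
            apply hc₂
            have heven : Even q.2.2 := by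
              rcases Int.even_or_odd q.2.2 with h' | h'
              · exact h'
              · exfalso
                obtain ⟨j, hj⟩ := h'
                have : 2 * (σ₂ * τ₂) = 4 * j ^ 2 + 4 * j + 1 := by rw [he₂, hj]; ring
                generalize σ₂ * τ₂ = S at this; generalize j ^ 2 = J at this; omega
            obtain ⟨f, hf⟩ := heven
            have hστf : σ₂ * τ₂ = 2 * f ^ 2 := by
              have : q.2.2 ^ 2 = 2 * (2 * f ^ 2) := by rw [hf]; ring
              linarith [he₂]
            have : Even (σ₂ * τ₂) := ⟨f ^ 2, by omega⟩
            rcases Int.even_mul.mp this with h'' | h''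
            · exact h''
            · exact (Int.not_even_iff_odd.mpr h h'').elim
        exact Int.even_iff.mp this
      omega
    have he : p.2.2 = q.2.2 := by
      have e2 : p.2.2 ^ 2 = q.2.2 ^ 2 := by rw [← he₁, ← he₂, hσ, hτ]
      have e3 : p.2.2.natAbs ^ 2 = q.2.2.natAbs ^ 2 := by
        have := congrArg Int.natAbs e2
        simpa [Int.natAbs_pow] using this
      have e4 : p.2.2.natAbs = q.2.2.natAbs := Nat.pow_left_injective (by norm_num) e3
      omega
    have : p.1 = q.1 := by rw [hb₁, hb₂, hσ, hτ]
    have : p.2.1 = q.2.1 := by rw [hd₁, hd₂, hσ, hτ]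
    exact Prod.ext ‹p.1 = q.1› (Prod.ext ‹p.2.1 = q.2.1› he)


def TEll (B : ℝ) : Set (ℤ × ℤ × ℤ) :=
  {x | Int.gcd x.1 (Int.gcd x.2.1 x.2.2) = 1 ∧
       x.1 ^ 2 + x.2.1 ^ 2 - 2 * x.2.2 ^ 2 = 0 ∧
       (x.1.natAbs : ℝ) ≤ B ∧ (x.2.1.natAbs : ℝ) ≤ B ∧ (x.2.2.natAbs : ℝ) ≤ 2 * B}

noncomputable def FE : ℤ × ℤ × ℤ → ℤ × ℤ × (Bool × Bool × Bool × Bool) := fun x =>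
  let p := (x.1 + x.2.1) / 2
  let q := (x.1 - x.2.1) / 2
  if Even q then
    let r := (x.2.2 + p) / 2
    let s := (x.2.2 - p) / 2
    ((Nat.sqrt r.natAbs : ℤ), (Nat.sqrt s.natAbs : ℤ),
      (true, decide (0 ≤ r), decide (0 ≤ s), decide (0 ≤ q)))
  else
    let r := (x.2.2 + q) / 2
    let s := (x.2.2 - q) / 2
    ((Nat.sqrt r.natAbs : ℤ), (Nat.sqrt s.natAbs : ℤ),
      (false, decide (0 ≤ r), decide (0 ≤ s), decide (0 ≤ p)))

lemma tell_facts {B : ℝ} {x : ℤ × ℤ × ℤ} (hx : x ∈ TEll B) :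
    ∃ p q : ℤ, x.1 = p + q ∧ x.2.1 = p - q ∧
      (x.1 + x.2.1) / 2 = p ∧ (x.1 - x.2.1) / 2 = q ∧
      p ^ 2 + q ^ 2 = x.2.2 ^ 2 ∧
      (Even q → ∃ r s : ℤ, (x.2.2 + p) / 2 = r ∧ (x.2.2 - p) / 2 = s ∧
        x.2.2 = r + s ∧ p = r - s ∧ q ^ 2 = 4 * (r * s) ∧
        r.natAbs = Nat.sqrt r.natAbs ^ 2 ∧ s.natAbs = Nat.sqrt s.natAbs ^ 2) ∧
      (¬ Even q → ∃ r s : ℤ, (x.2.2 + q) / 2 = r ∧ (x.2.2 - q) / 2 = s ∧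
        x.2.2 = r + s ∧ q = r - s ∧ p ^ 2 = 4 * (r * s) ∧
        r.natAbs = Nat.sqrt r.natAbs ^ 2 ∧ s.natAbs = Nat.sqrt s.natAbs ^ 2) := by
  obtain ⟨b, c, e⟩ := x
  obtain ⟨hgcd, heq, hbB, hcB, heB⟩ := hx
  simp only at hgcd heq hbB hcB heB ⊢
  have hq : Int.gcd b c = 1 := by
    apply gcd_pair_eq_one hgcd
    have h1 : (Int.gcd b c : ℤ) ∣ b := (Int.gcd_dvd_left _ _)
    have h2 : (Int.gcd b c : ℤ) ∣ c := (Int.gcd_dvd_right _ _)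
    have h3 : ((Int.gcd b c : ℤ)) ^ 2 ∣ b ^ 2 + c ^ 2 :=
      dvd_add (pow_dvd_pow_of_dvd h1 2) (pow_dvd_pow_of_dvd h2 2)
    have heq2 : b ^ 2 + c ^ 2 = 2 * e ^ 2 := by linarith
    rwa [heq2] at h3
  have hcop : IsCoprime b c := Int.isCoprime_iff_gcd_eq_one.mpr hq
  have hodd : Odd b ∧ Odd c := by
    rcases Int.even_or_odd b with hb | hb <;> rcases Int.even_or_odd c with hc | hc
    · exfalso
      have h2 : IsUnit (2 : ℤ) := hcop.isUnit_of_dvd' hb.two_dvd hc.two_dvd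
      rw [Int.isUnit_iff] at h2; omega
    · exfalso
      obtain ⟨k, hk⟩ := hb; obtain ⟨l, hl⟩ := hc
      have h1 : b ^ 2 = 4 * k ^ 2 := by rw [hk]; ring
      have h2 : c ^ 2 = 4 * l ^ 2 + 4 * l + 1 := by rw [hl]; ring
      have h3 : (4:ℤ) * k ^ 2 + (4 * l ^ 2 + 4 * l + 1) - 2 * e ^ 2 = 0 := by
        rw [← h1, ← h2]; linarith
      generalize k ^ 2 = K at h3; generalize l ^ 2 = L at h3; generalize e ^ 2 = E at h3
      omega
    · exfalso
      obtain ⟨k, hk⟩ := hb; obtain ⟨l, hl⟩ := hc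
      have h1 : b ^ 2 = 4 * k ^ 2 + 4 * k + 1 := by rw [hk]; ring
      have h2 : c ^ 2 = 4 * l ^ 2 := by rw [hl]; ring
      have h3 : (4:ℤ) * k ^ 2 + 4 * k + 1 + 4 * l ^ 2 - 2 * e ^ 2 = 0 := by
        rw [← h1]; rw [h2] at heq; linarith
      generalize k ^ 2 = K at h3; generalize l ^ 2 = L at h3; generalize e ^ 2 = E at h3
      omega
    · exact ⟨hb, hc⟩
  obtain ⟨⟨k, hk⟩, ⟨l, hl⟩⟩ := hodd
  set p := k + l + 1 with hpdef
  set q := k - l with hqdef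
  have hb' : b = p + q := by omega
  have hc' : c = p - q := by omega
  have hpq : p ^ 2 + q ^ 2 = e ^ 2 := by
    have : b ^ 2 + c ^ 2 = 2 * (p ^ 2 + q ^ 2) := by rw [hb', hc']; ring
    linarith
  have hcoppq : IsCoprime p q := isCoprime_of_sum_diff hb' hc' hq
  -- e is odd
  have heodd : Odd e := by
    rcases Int.even_or_odd e with he | he
    · exfalso
      obtain ⟨j, hj⟩ := he
      have hesq : e ^ 2 = 4 * j ^ 2 := by rw [hj]; ring
      -- p, q opposite parity since p + q = b odd
      rcases Int.even_or_odd p with hp | hp <;> rcases Int.even_or_odd q with hq' | hq'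
      · obtain ⟨s, hs⟩ := hp; obtain ⟨t, ht⟩ := hq'; omega
      · obtain ⟨s, hs⟩ := hp; obtain ⟨t, ht⟩ := hq'
        have h1 : p ^ 2 = 4 * s ^ 2 := by rw [hs]; ring
        have h2 : q ^ 2 = 4 * t ^ 2 + 4 * t + 1 := by rw [ht]; ring
        have h3 : 4 * s ^ 2 + (4 * t ^ 2 + 4 * t + 1) = 4 * j ^ 2 := by
          rw [← h1, ← h2, hpq, hesq]
        generalize s ^ 2 = S at h3; generalize t ^ 2 = T at h3; generalize j ^ 2 = J at h3
        omega
      · obtain ⟨s, hs⟩ := hp; obtain ⟨t, ht⟩ := hq'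
        have h1 : p ^ 2 = 4 * s ^ 2 + 4 * s + 1 := by rw [hs]; ring
        have h2 : q ^ 2 = 4 * t ^ 2 := by rw [ht]; ring
        have h3 : (4 * s ^ 2 + 4 * s + 1) + 4 * t ^ 2 = 4 * j ^ 2 := by
          rw [← h1, ← h2, hpq, hesq]
        generalize s ^ 2 = S at h3; generalize t ^ 2 = T at h3; generalize j ^ 2 = J at h3
        omega
      · obtain ⟨s, hs⟩ := hp; obtain ⟨t, ht⟩ := hq'; omega
    · exact he
  obtain ⟨m, hm⟩ := heodd
  refine ⟨p, q, hb', hc', by omega, by omega, hpq, ?_, ?_⟩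
  · -- Even q branch
    intro hqeven
    obtain ⟨t, ht⟩ := hqeven
    have hqt : q = 2 * t := by omega
    have hpodd : Odd p := by
      rcases Int.even_or_odd p with hp | hp
      · exfalso; obtain ⟨s, hs⟩ := hp; omega
      · exact hp
    obtain ⟨s0, hs0⟩ := hpodd
    obtain ⟨r0, hr0⟩ : ∃ r0, e + p = 2 * r0 := ⟨m + s0 + 1, by omega⟩
    obtain ⟨sx, hsx⟩ : ∃ sx, e - p = 2 * sx := ⟨m - s0, by omega⟩
    have hrdiv : (e + p) / 2 = r0 := by omega
    have hsdiv : (e - p) / 2 = sx := by omega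
    have hq2 : q ^ 2 = 4 * (r0 * sx) := by
      have h7 : (2 * r0) * (2 * sx) = q ^ 2 := by
        rw [← hr0, ← hsx]; linear_combination -hpq
      linarith
    have hrs : r0 * sx = t ^ 2 := by
      have h8 : q ^ 2 = 4 * t ^ 2 := by rw [hqt]; ring
      linarith
    have hcoprs : IsCoprime r0 sx := by
      rw [Int.isCoprime_iff_gcd_eq_one]
      have h1 : (Int.gcd r0 sx : ℤ) ∣ p := by
        have hd : (Int.gcd r0 sx : ℤ) ∣ r0 - sx := dvd_sub (Int.gcd_dvd_left _ _) (Int.gcd_dvd_right _ _)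
        have hp' : p = r0 - sx := by omega
        rwa [← hp'] at hd
      have h2 : (Int.gcd r0 sx : ℤ) ∣ q ^ 2 := by
        rw [hq2]
        exact Dvd.dvd.mul_left (Dvd.dvd.mul_right (Int.gcd_dvd_left _ _) sx) 4
      have h3 : Int.gcd p (q ^ 2) = 1 := Int.isCoprime_iff_gcd_eq_one.mp hcoppq.pow_right
      have h4 := Int.dvd_coe_gcd h1 h2
      rw [h3] at h4
      exact_mod_cast Nat.dvd_one.mp (by exact_mod_cast h4)
    obtain ⟨u, hu⟩ := Int.sq_of_isCoprime hcoprs hrs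
    obtain ⟨v, hv⟩ := Int.sq_of_isCoprime hcoprs.symm (by rw [mul_comm]; exact hrs)
    exact ⟨r0, sx, hrdiv, hsdiv, by omega, by omega, hq2,
      natAbs_sq_of_pm hu, natAbs_sq_of_pm hv⟩
  · -- Odd q branch
    intro hqodd
    have hpeven : Even p := by
      rcases Int.even_or_odd p with hp | hp
      · exact hp
      · exfalso; apply hqodd
        obtain ⟨s, hs⟩ := hp
        rcases Int.even_or_odd q with h | h
        · exact h
        · exfalso; obtain ⟨t, ht⟩ := h; omega
    obtain ⟨t0, ht0⟩ := hpeven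
    have hpt : p = 2 * t0 := by omega
    have hqodd' : Odd q := Int.odd_iff.mpr (by
      rcases Int.even_or_odd q with h | h
      · exact absurd h hqodd
      · exact Int.odd_iff.mp h)
    obtain ⟨s0, hs0⟩ := hqodd'
    obtain ⟨r0, hr0⟩ : ∃ r0, e + q = 2 * r0 := ⟨m + s0 + 1, by omega⟩
    obtain ⟨sx, hsx⟩ : ∃ sx, e - q = 2 * sx := ⟨m - s0, by omega⟩
    have hrdiv : (e + q) / 2 = r0 := by omega
    have hsdiv : (e - q) / 2 = sx := by omega
    have hp2 : p ^ 2 = 4 * (r0 * sx) := by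
      have h7 : (2 * r0) * (2 * sx) = p ^ 2 := by
        rw [← hr0, ← hsx]; linear_combination -hpq
      linarith
    have hrs : r0 * sx = t0 ^ 2 := by
      have h8 : p ^ 2 = 4 * t0 ^ 2 := by rw [hpt]; ring
      linarith
    have hcoprs : IsCoprime r0 sx := by
      rw [Int.isCoprime_iff_gcd_eq_one]
      have h1 : (Int.gcd r0 sx : ℤ) ∣ q := by
        have hd : (Int.gcd r0 sx : ℤ) ∣ r0 - sx := dvd_sub (Int.gcd_dvd_left _ _) (Int.gcd_dvd_right _ _)
        have hq' : q = r0 - sx := by omega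
        rwa [← hq'] at hd
      have h2 : (Int.gcd r0 sx : ℤ) ∣ p ^ 2 := by
        rw [hp2]
        exact Dvd.dvd.mul_left (Dvd.dvd.mul_right (Int.gcd_dvd_left _ _) sx) 4
      have h3 : Int.gcd q (p ^ 2) = 1 := Int.isCoprime_iff_gcd_eq_one.mp hcoppq.symm.pow_right
      have h4 := Int.dvd_coe_gcd h1 h2
      rw [h3] at h4
      exact_mod_cast Nat.dvd_one.mp (by exact_mod_cast h4)
    obtain ⟨u, hu⟩ := Int.sq_of_isCoprime hcoprs hrs
    obtain ⟨v, hv⟩ := Int.sq_of_isCoprime hcoprs.symm (by rw [mul_comm]; exact hrs)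
    exact ⟨r0, sx, hrdiv, hsdiv, by omega, by omega, hp2,
      natAbs_sq_of_pm hu, natAbs_sq_of_pm hv⟩


lemma fe_bounds {B : ℝ} (hB : 1 ≤ B) {x : ℤ × ℤ × ℤ} (hx : x ∈ TEll B) :
    (FE x).1.natAbs ≤ ⌊Real.sqrt (2 * B)⌋₊ ∧ (FE x).2.1.natAbs ≤ ⌊Real.sqrt (2 * B)⌋₊ := by
  obtain ⟨p, q, hb, hc, hpdiv, hqdiv, hpq, hA, hB'⟩ := tell_facts hx
  obtain ⟨hgcd, heq, hbB, hcB, heB⟩ := hx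
  have hpB : (p.natAbs : ℝ) ≤ B := by
    have h1 : 2 * p.natAbs ≤ x.1.natAbs + x.2.1.natAbs := by omega
    have h2 : ((2 * p.natAbs : ℕ) : ℝ) ≤ (x.1.natAbs : ℝ) + (x.2.1.natAbs : ℝ) := by
      exact_mod_cast h1
    push_cast at h2; linarith
  have hqB : (q.natAbs : ℝ) ≤ B := by
    have h1 : 2 * q.natAbs ≤ x.1.natAbs + x.2.1.natAbs := by omega
    have h2 : ((2 * q.natAbs : ℕ) : ℝ) ≤ (x.1.natAbs : ℝ) + (x.2.1.natAbs : ℝ) := by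
      exact_mod_cast h1
    push_cast at h2; linarith
  unfold FE
  simp only [hpdiv, hqdiv]
  by_cases hc' : Even q
  · obtain ⟨r, s, hrdiv, hsdiv, he', hp', hq2, hr2, hs2⟩ := hA hc'
    simp only [hc', if_true, hrdiv, hsdiv]
    have hrB : (r.natAbs : ℝ) ≤ 2 * B := by
      have h1 : 2 * r.natAbs ≤ x.2.2.natAbs + p.natAbs := by omega
      have h2 : ((2 * r.natAbs : ℕ) : ℝ) ≤ (x.2.2.natAbs : ℝ) + (p.natAbs : ℝ) := by
        exact_mod_cast h1
      push_cast at h2; linarith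
    have hsB : (s.natAbs : ℝ) ≤ 2 * B := by
      have h1 : 2 * s.natAbs ≤ x.2.2.natAbs + p.natAbs := by omega
      have h2 : ((2 * s.natAbs : ℕ) : ℝ) ≤ (x.2.2.natAbs : ℝ) + (p.natAbs : ℝ) := by
        exact_mod_cast h1
      push_cast at h2; linarith
    constructor
    · simpa using sqrt_le_floor_sqrt hB hrB
    · simpa using sqrt_le_floor_sqrt hB hsB
  · obtain ⟨r, s, hrdiv, hsdiv, he', hq', hp2, hr2, hs2⟩ := hB' hc'
    simp only [hc', if_false, hrdiv, hsdiv]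
    have hrB : (r.natAbs : ℝ) ≤ 2 * B := by
      have h1 : 2 * r.natAbs ≤ x.2.2.natAbs + q.natAbs := by omega
      have h2 : ((2 * r.natAbs : ℕ) : ℝ) ≤ (x.2.2.natAbs : ℝ) + (q.natAbs : ℝ) := by
        exact_mod_cast h1
      push_cast at h2; linarith
    have hsB : (s.natAbs : ℝ) ≤ 2 * B := by
      have h1 : 2 * s.natAbs ≤ x.2.2.natAbs + q.natAbs := by omega
      have h2 : ((2 * s.natAbs : ℕ) : ℝ) ≤ (x.2.2.natAbs : ℝ) + (q.natAbs : ℝ) := by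
        exact_mod_cast h1
      push_cast at h2; linarith
    constructor
    · simpa using sqrt_le_floor_sqrt hB hrB
    · simpa using sqrt_le_floor_sqrt hB hsB

lemma fe_inj (B : ℝ) : Set.InjOn FE (TEll B) := by
  intro x hx y hy h
  obtain ⟨p₁, q₁, hb₁, hc₁, hpdiv₁, hqdiv₁, hpq₁, hA₁, hB₁⟩ := tell_facts hx
  obtain ⟨p₂, q₂, hb₂, hc₂, hpdiv₂, hqdiv₂, hpq₂, hA₂, hB₂⟩ := tell_facts hy
  unfold FE at h
  simp only [hpdiv₁, hqdiv₁, hpdiv₂, hqdiv₂] at h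
  by_cases hc₁' : Even q₁ <;> by_cases hc₂' : Even q₂
  · obtain ⟨r₁, s₁, hrdiv₁, hsdiv₁, he₁, hp₁, hq2₁, hr2₁, hs2₁⟩ := hA₁ hc₁'
    obtain ⟨r₂, s₂, hrdiv₂, hsdiv₂, he₂, hp₂, hq2₂, hr2₂, hs2₂⟩ := hA₂ hc₂'
    simp only [hc₁', hc₂', if_true, hrdiv₁, hsdiv₁, hrdiv₂, hsdiv₂, Prod.mk.injEq,
      Nat.cast_inj, decide_eq_decide] at h
    obtain ⟨h1, h2, -, h4, h5, h6⟩ := h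
    have hr : r₁ = r₂ := by
      have e1 : r₁.natAbs = r₂.natAbs := by rw [hr2₁, hr2₂, h1]
      omega
    have hs : s₁ = s₂ := by
      have e1 : s₁.natAbs = s₂.natAbs := by rw [hs2₁, hs2₂, h2]
      omega
    have hqq : q₁ = q₂ := by
      have e2 : q₁ ^ 2 = q₂ ^ 2 := by rw [hq2₁, hq2₂, hr, hs]
      have e3 : q₁.natAbs = q₂.natAbs := by
        have := congrArg Int.natAbs e2
        simp only [Int.natAbs_pow] at this
        exact Nat.pow_left_injective (by norm_num) this
      omega
    have hee : x.2.2 = y.2.2 := by rw [he₁, he₂, hr, hs]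
    have hpp : p₁ = p₂ := by rw [hp₁, hp₂, hr, hs]
    have hxx : x.1 = y.1 := by rw [hb₁, hb₂, hpp, hqq]
    have hyy : x.2.1 = y.2.1 := by rw [hc₁, hc₂, hpp, hqq]
    exact Prod.ext hxx (Prod.ext hyy hee)
  · exfalso
    simp only [hc₁', hc₂', if_true, if_false, Prod.mk.injEq] at h
    exact absurd h.2.2.1 (by simp)
  · exfalso
    simp only [hc₁', hc₂', if_true, if_false, Prod.mk.injEq] at h
    exact absurd h.2.2.1 (by simp)
  · obtain ⟨r₁, s₁, hrdiv₁, hsdiv₁, he₁, hq₁', hp2₁, hr2₁, hs2₁⟩ := hB₁ hc₁'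
    obtain ⟨r₂, s₂, hrdiv₂, hsdiv₂, he₂, hq₂', hp2₂, hr2₂, hs2₂⟩ := hB₂ hc₂'
    simp only [hc₁', hc₂', if_false, hrdiv₁, hsdiv₁, hrdiv₂, hsdiv₂, Prod.mk.injEq,
      Nat.cast_inj, decide_eq_decide] at h
    obtain ⟨h1, h2, -, h4, h5, h6⟩ := h
    have hr : r₁ = r₂ := by
      have e1 : r₁.natAbs = r₂.natAbs := by rw [hr2₁, hr2₂, h1]
      omega
    have hs : s₁ = s₂ := by
      have e1 : s₁.natAbs = s₂.natAbs := by rw [hs2₁, hs2₂, h2]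
      omega
    have hpp : p₁ = p₂ := by
      have e2 : p₁ ^ 2 = p₂ ^ 2 := by rw [hp2₁, hp2₂, hr, hs]
      have e3 : p₁.natAbs = p₂.natAbs := by
        have := congrArg Int.natAbs e2
        simp only [Int.natAbs_pow] at this
        exact Nat.pow_left_injective (by norm_num) this
      omega
    have hee : x.2.2 = y.2.2 := by rw [he₁, he₂, hr, hs]
    have hqq : q₁ = q₂ := by rw [hq₁', hq₂', hr, hs]
    have hxx : x.1 = y.1 := by rw [hb₁, hb₂, hpp, hqq]
    have hyy : x.2.1 = y.2.1 := by rw [hc₁, hc₂, hpp, hqq]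
    exact Prod.ext hxx (Prod.ext hyy hee)


def TSurf (B : ℝ) : Set (ℤ × ℤ × ℤ × ℤ) :=
  {x | Int.gcd x.1 (Int.gcd x.2.1 (Int.gcd x.2.2.1 x.2.2.2)) = 1 ∧
       x.1 * x.2.1 = x.2.2.1 * x.2.2.2 ∧
       x.1 ^ 2 + x.2.1 ^ 2 + x.2.2.1 ^ 2 - x.2.2.2 ^ 2 = 0 ∧
       x.1 ≠ 0 ∧ x.2.1 ≠ 0 ∧ x.2.2.1 ≠ 0 ∧ x.2.2.2 ≠ 0 ∧
       (x.2.2.2.natAbs : ℝ) ≤ B}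

noncomputable def FS : ℤ × ℤ × ℤ × ℤ → ℤ × ℤ × Bool := fun x =>
  let g : ℤ := (Int.gcd x.1 x.2.2.1 : ℤ)
  (x.1 / g, x.2.2.1 / g, decide (0 ≤ x.2.1 * (x.2.2.1 / g)))

set_option maxHeartbeats 1000000 in
lemma tsurf_facts {B : ℝ} {x : ℤ × ℤ × ℤ × ℤ} (hx : x ∈ TSurf B) :
    ∃ g m n h K : ℤ,
      0 < g ∧ x.1 = g * m ∧ x.2.2.1 = g * n ∧
      x.1 / (Int.gcd x.1 x.2.2.1 : ℤ) = m ∧ x.2.2.1 / (Int.gcd x.1 x.2.2.1 : ℤ) = n ∧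
      x.2.1 = n * h ∧ x.2.2.2 = m * h ∧
      h ≠ 0 ∧ m ≠ 0 ∧ n ≠ 0 ∧
      m ^ 2 + n ^ 2 = K * h ^ 2 ∧ m ^ 2 - n ^ 2 = K * g ^ 2 ∧
      (K = 1 ∨ K = 2) ∧ (K = 2 ↔ Even (m ^ 2 + n ^ 2)) ∧
      m ^ 2 * m ^ 2 ≤ 2 * x.2.2.2 ^ 2 ∧ n ^ 2 ≤ m ^ 2 := by
  obtain ⟨a, b, c, d⟩ := x
  obtain ⟨hgcd, hab, heq, ha0, hb0, hc0, hd0, hdB⟩ := hx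
  simp only at hgcd hab heq ha0 hb0 hc0 hd0 hdB ⊢
  set g0 : ℕ := Int.gcd a c with hg0
  have hg0pos : 0 < g0 := by
    rcases Nat.eq_zero_or_pos g0 with h | h
    · exfalso; rw [hg0] at h; exact ha0 (Int.gcd_eq_zero_iff.mp h).1
    · exact h
  set g : ℤ := (g0 : ℤ) with hgdef
  have hgpos : 0 < g := by rw [hgdef]; exact_mod_cast hg0pos
  have hgne : g ≠ 0 := ne_of_gt hgpos
  have hga : g ∣ a := (Int.gcd_dvd_left _ _)
  have hgc : g ∣ c := (Int.gcd_dvd_right _ _)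
  set m := a / g with hmdef
  set n := c / g with hndef
  have ham : a = g * m := (Int.mul_ediv_cancel' hga).symm
  have hcn : c = g * n := (Int.mul_ediv_cancel' hgc).symm
  have hmn : Int.gcd m n = 1 := Int.gcd_div_gcd_div_gcd hg0pos
  have hcopmn : IsCoprime m n := Int.isCoprime_iff_gcd_eq_one.mpr hmn
  have hm0 : m ≠ 0 := by intro h0; rw [h0, mul_zero] at ham; exact ha0 ham
  have hn0 : n ≠ 0 := by intro h0; rw [h0, mul_zero] at hcn; exact hc0 hcn
  have hmb : m * b = n * d := by
    have h1 : g * (m * b) = g * (n * d) := by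
      rw [show g * (m * b) = (g * m) * b by ring, ← ham,
          show g * (n * d) = (g * n) * d by ring, ← hcn]
      exact hab
    exact mul_left_cancel₀ hgne h1
  have hnb : n ∣ b := by
    have h1 : n ∣ m * b := ⟨d, hmb⟩
    exact hcopmn.symm.dvd_of_dvd_mul_left h1
  obtain ⟨h, hbh⟩ := hnb
  have hdh : d = m * h := by
    have h1 : n * (m * h) = n * d := by rw [← hmb, hbh]; ring
    exact (mul_left_cancel₀ hn0 h1).symm
  have hh0 : h ≠ 0 := by rintro rfl; rw [mul_zero] at hbh; exact hb0 hbh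
  have hkey : g ^ 2 * (m ^ 2 + n ^ 2) = h ^ 2 * (m ^ 2 - n ^ 2) := by
    rw [ham, hbh, hcn, hdh] at heq
    linear_combination heq
  -- gcd(g,h) = 1
  have hcopgh : IsCoprime g h := by
    rw [Int.isCoprime_iff_gcd_eq_one]
    have h1 : (Int.gcd g h : ℤ) ∣ a := by rw [ham]; exact (Int.gcd_dvd_left _ _).mul_right m
    have h2 : (Int.gcd g h : ℤ) ∣ b := by rw [hbh]; exact (Int.gcd_dvd_right _ _).mul_left n
    have h3 : (Int.gcd g h : ℤ) ∣ c := by rw [hcn]; exact (Int.gcd_dvd_left _ _).mul_right n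
    have h4 : (Int.gcd g h : ℤ) ∣ d := by rw [hdh]; exact (Int.gcd_dvd_right _ _).mul_left m
    have h5 := Int.dvd_coe_gcd h1 (Int.dvd_coe_gcd h2 (Int.dvd_coe_gcd h3 h4))
    rw [hgcd] at h5
    exact_mod_cast Nat.dvd_one.mp (by exact_mod_cast h5)
  have hdvd : h ^ 2 ∣ m ^ 2 + n ^ 2 := by
    have h1 : h ^ 2 ∣ g ^ 2 * (m ^ 2 + n ^ 2) := by
      rw [hkey]; exact Dvd.intro _ rfl
    exact (hcopgh.symm.pow).dvd_of_dvd_mul_left h1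
  obtain ⟨K, hK⟩ := hdvd
  have hKsym : m ^ 2 + n ^ 2 = K * h ^ 2 := by rw [hK]; ring
  have hKg : m ^ 2 - n ^ 2 = K * g ^ 2 := by
    have h1 : h ^ 2 * (K * g ^ 2) = h ^ 2 * (m ^ 2 - n ^ 2) := by
      rw [← hkey, hKsym]; ring
    exact (mul_left_cancel₀ (pow_ne_zero 2 hh0) h1).symm
  have hKpos : 0 < K := by
    have h1 : 0 < m ^ 2 + n ^ 2 := by positivity
    nlinarith [sq_nonneg h, pow_ne_zero 2 hh0, sq_nonneg h]
  have hK2 : K ∣ 2 := by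
    have h1 : K ∣ 2 * m ^ 2 := ⟨h ^ 2 + g ^ 2, by linarith [hKsym, hKg]⟩
    have h2 : K ∣ 2 * n ^ 2 := ⟨h ^ 2 - g ^ 2, by linarith [hKsym, hKg]⟩
    have h3 : Int.gcd (2 * m ^ 2) (2 * n ^ 2) = 2 := by
      rw [Int.gcd_mul_left]
      have : Int.gcd (m ^ 2) (n ^ 2) = 1 :=
        Int.isCoprime_iff_gcd_eq_one.mp (hcopmn.pow)
      simp [this]
    have h4 := Int.dvd_coe_gcd h1 h2
    rw [h3] at h4
    exact_mod_cast h4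
  have hK12 : K = 1 ∨ K = 2 := by
    have := Int.le_of_dvd (by norm_num) hK2
    interval_cases K <;> omega
  -- parity characterization of K
  have hKparity : K = 2 ↔ Even (m ^ 2 + n ^ 2) := by
    constructor
    · rintro rfl
      exact ⟨h ^ 2, by linarith [hKsym]⟩
    · intro hev
      rcases hK12 with rfl | rfl
      · exfalso
        -- m² + n² = h², and m,n coprime with m²+n² even forces m,n odd, m²+n² ≡ 2 mod 4
        have hmn_odd : Odd m ∧ Odd n := by
          rcases Int.even_or_odd m with hm | hm <;> rcases Int.even_or_odd n with hn | hn
          · exfalso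
            have h2 : IsUnit (2 : ℤ) := hcopmn.isUnit_of_dvd' hm.two_dvd hn.two_dvd
            rw [Int.isUnit_iff] at h2; omega
          · exfalso
            obtain ⟨u, hu⟩ := hm; obtain ⟨v, hv⟩ := hn
            obtain ⟨w, hw⟩ := hev
            have e1 : m ^ 2 = 4 * u ^ 2 := by rw [hu]; ring
            have e2 : n ^ 2 = 4 * v ^ 2 + 4 * v + 1 := by rw [hv]; ring
            have e3 : m ^ 2 + n ^ 2 = w + w := hw
            generalize m ^ 2 = M2 at e1 e3; generalize n ^ 2 = N2 at e2 e3
            generalize u ^ 2 = U at e1; generalize v ^ 2 = V at e2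
            omega
          · exfalso
            obtain ⟨u, hu⟩ := hm; obtain ⟨v, hv⟩ := hn
            obtain ⟨w, hw⟩ := hev
            have e1 : m ^ 2 = 4 * u ^ 2 + 4 * u + 1 := by rw [hu]; ring
            have e2 : n ^ 2 = 4 * v ^ 2 := by rw [hv]; ring
            have e3 : m ^ 2 + n ^ 2 = w + w := hw
            generalize m ^ 2 = M2 at e1 e3; generalize n ^ 2 = N2 at e2 e3
            generalize u ^ 2 = U at e1; generalize v ^ 2 = V at e2
            omega
          · exact ⟨hm, hn⟩
        obtain ⟨⟨u, hu⟩, ⟨v, hv⟩⟩ := hmn_odd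
        have e1 : m ^ 2 = 4 * u ^ 2 + 4 * u + 1 := by rw [hu]; ring
        have e2 : n ^ 2 = 4 * v ^ 2 + 4 * v + 1 := by rw [hv]; ring
        have e3 : m ^ 2 + n ^ 2 = 1 * h ^ 2 := hKsym
        rcases Int.even_or_odd h with hh | hh
        · obtain ⟨w, hw⟩ := hh
          have e4 : h ^ 2 = 4 * w ^ 2 := by rw [hw]; ring
          rw [e1, e2, e4] at e3
          generalize u ^ 2 = U at e3; generalize v ^ 2 = V at e3
          generalize w ^ 2 = W at e3
          omega
        · obtain ⟨w, hw⟩ := hh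
          have e4 : h ^ 2 = 4 * w ^ 2 + 4 * w + 1 := by rw [hw]; ring
          rw [e1, e2, e4] at e3
          generalize u ^ 2 = U at e3; generalize v ^ 2 = V at e3
          generalize w ^ 2 = W at e3
          omega
      · rfl
  refine ⟨g, m, n, h, K, hgpos, ham, hcn, rfl, rfl, hbh, hdh, hh0, hm0, hn0,
    hKsym, hKg, hK12, hKparity, ?_, ?_⟩
  · -- m⁴ ≤ 2 d²
    have h1 : m ^ 2 ≤ 2 * h ^ 2 := by
      have h2 : m ^ 2 + n ^ 2 ≤ 2 * h ^ 2 := by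
        rcases hK12 with rfl | rfl
        · nlinarith [hKsym, sq_nonneg h]
        · nlinarith [hKsym]
      nlinarith [sq_nonneg n]
    have h2 : d ^ 2 = m ^ 2 * h ^ 2 := by rw [hdh]; ring
    have h3 : m ^ 2 * m ^ 2 ≤ m ^ 2 * (2 * h ^ 2) := mul_le_mul_of_nonneg_left h1 (sq_nonneg m)
    have h4 : m ^ 2 * (2 * h ^ 2) = 2 * d ^ 2 := by rw [h2]; ring
    linarith
  · -- n² ≤ m²
    have h5 : 0 < K * g ^ 2 := mul_pos hKpos (by positivity)
    linarith


lemma cast_natAbs_sq (m : ℤ) : ((m.natAbs : ℝ)) ^ 2 = ((m : ℝ)) ^ 2 := by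
  push_cast [Nat.cast_natAbs]; ring_nf; rw [sq_abs]

lemma natAbs_le_sqrt_floor {m : ℤ} {B : ℝ} (hB : 1 ≤ B) (h : ((m : ℝ)) ^ 2 ≤ 2 * B) :
    m.natAbs ≤ ⌊Real.sqrt (2 * B)⌋₊ := by
  apply Nat.le_floor
  rw [Real.le_sqrt (by positivity) (by linarith)]
  rw [cast_natAbs_sq]; exact h

lemma fs_bounds {B : ℝ} (hB : 1 ≤ B) {x : ℤ × ℤ × ℤ × ℤ} (hx : x ∈ TSurf B) :
    (FS x).1.natAbs ≤ ⌊Real.sqrt (2 * B)⌋₊ ∧ (FS x).2.1.natAbs ≤ ⌊Real.sqrt (2 * B)⌋₊ := by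
  obtain ⟨g, m, n, h, K, hg, ham, hcn, hmdiv, hndiv, hbh, hdh, hh0, hm0, hn0,
    hKs, hKg, hK12, hKpar, hm4, hnm⟩ := tsurf_facts hx
  have hdB : (x.2.2.2.natAbs : ℝ) ≤ B := hx.2.2.2.2.2.2.2
  have hd2 : ((x.2.2.2 : ℝ)) ^ 2 ≤ B ^ 2 := by
    rw [← cast_natAbs_sq]
    have : (0:ℝ) ≤ (x.2.2.2.natAbs : ℝ) := by positivity
    nlinarith
  have hm2 : ((m : ℝ)) ^ 2 ≤ 2 * B := by
    have h1 : ((m : ℝ)) ^ 2 * ((m : ℝ)) ^ 2 ≤ 2 * ((x.2.2.2 : ℝ)) ^ 2 := by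
      have := hm4
      have h2 : ((m ^ 2 * m ^ 2 : ℤ) : ℝ) ≤ ((2 * x.2.2.2 ^ 2 : ℤ) : ℝ) := by
        exact_mod_cast this
      push_cast at h2
      linarith
    nlinarith [sq_nonneg ((m : ℝ) ^ 2 - 2 * B), sq_nonneg ((m:ℝ))]
  have hn2 : ((n : ℝ)) ^ 2 ≤ 2 * B := by
    have h1 : ((n ^ 2 : ℤ) : ℝ) ≤ ((m ^ 2 : ℤ) : ℝ) := by exact_mod_cast hnm
    push_cast at h1
    linarith
  unfold FS
  simp only [hmdiv, hndiv]
  exact ⟨natAbs_le_sqrt_floor hB hm2, natAbs_le_sqrt_floor hB hn2⟩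

lemma fs_inj (B : ℝ) : Set.InjOn FS (TSurf B) := by
  intro x hx y hy hfs
  obtain ⟨g₁, m₁, n₁, h₁, K₁, hg₁, ham₁, hcn₁, hmdiv₁, hndiv₁, hbh₁, hdh₁, hh₁, hm₁, hn₁,
    hKs₁, hKg₁, hK12₁, hKpar₁, -, -⟩ := tsurf_facts hx
  obtain ⟨g₂, m₂, n₂, h₂, K₂, hg₂, ham₂, hcn₂, hmdiv₂, hndiv₂, hbh₂, hdh₂, hh₂, hm₂, hn₂,
    hKs₂, hKg₂, hK12₂, hKpar₂, -, -⟩ := tsurf_facts hy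
  unfold FS at hfs
  simp only [hmdiv₁, hndiv₁, hmdiv₂, hndiv₂, Prod.mk.injEq, decide_eq_decide] at hfs
  obtain ⟨hm, hn, hflag⟩ := hfs
  have hsign : (0 ≤ h₁) ↔ (0 ≤ h₂) := by
    have e1 : x.2.1 * n₁ = n₁ ^ 2 * h₁ := by rw [hbh₁]; ring
    have e2 : y.2.1 * n₂ = n₂ ^ 2 * h₂ := by rw [hbh₂]; ring
    rw [e1, e2] at hflag
    rw [mul_nonneg_iff_of_pos_left (by positivity : (0:ℤ) < n₁ ^ 2),
        mul_nonneg_iff_of_pos_left (by positivity : (0:ℤ) < n₂ ^ 2)] at hflag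
    exact hflag
  have hKK : K₁ = K₂ := by
    rw [hm, hn] at hKpar₁
    by_cases hev : Even (m₂ ^ 2 + n₂ ^ 2)
    · rw [hKpar₁.mpr hev, hKpar₂.mpr hev]
    · rcases hK12₁ with e | e
      · rcases hK12₂ with e' | e'
        · rw [e, e']
        · exact absurd (hKpar₂.mp e') hev
      · exact absurd (hKpar₁.mp e) hev
  have hKne : K₂ ≠ 0 := by rcases hK12₂ with e | e <;> omega
  have hhh : h₁ = h₂ := by
    have e1 : K₂ * h₁ ^ 2 = K₂ * h₂ ^ 2 := by
      rw [← hKs₂, ← hKK, ← hKs₁, hm, hn]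
    have e2 : h₁ ^ 2 = h₂ ^ 2 := mul_left_cancel₀ hKne e1
    have e3 : h₁.natAbs = h₂.natAbs := by
      have := congrArg Int.natAbs e2
      simp only [Int.natAbs_pow] at this
      exact Nat.pow_left_injective (by norm_num) this
    omega
  have hgg : g₁ = g₂ := by
    have e1 : K₂ * g₁ ^ 2 = K₂ * g₂ ^ 2 := by
      rw [← hKg₂, ← hKK, ← hKg₁, hm, hn]
    have e2 : g₁ ^ 2 = g₂ ^ 2 := mul_left_cancel₀ hKne e1
    have e3 : g₁.natAbs = g₂.natAbs := by
      have := congrArg Int.natAbs e2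
      simp only [Int.natAbs_pow] at this
      exact Nat.pow_left_injective (by norm_num) this
    omega
  have c1 : x.1 = y.1 := by rw [ham₁, ham₂, hm, hgg]
  have c2 : x.2.1 = y.2.1 := by rw [hbh₁, hbh₂, hn, hhh]
  have c3 : x.2.2.1 = y.2.2.1 := by rw [hcn₁, hcn₂, hn, hgg]
  have c4 : x.2.2.2 = y.2.2.2 := by rw [hdh₁, hdh₂, hm, hhh]
  exact Prod.ext c1 (Prod.ext c2 (Prod.ext c3 c4))


lemma count_real {α : Type*} {B : ℝ} (hB : 1 ≤ B) (s : Set α) {L : Type*} [Fintype L]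
    [DecidableEq L] (f : α → ℤ × ℤ × L) (hinj : Set.InjOn f s)
    (hb : ∀ x ∈ s, (f x).1.natAbs ≤ ⌊Real.sqrt (2 * B)⌋₊ ∧
      (f x).2.1.natAbs ≤ ⌊Real.sqrt (2 * B)⌋₊) :
    ((s.ncard : ℝ)) ≤ 18 * Fintype.card L * B := by
  have h1 := ncard_le_box s ⌊Real.sqrt (2 * B)⌋₊ f hinj hb
  have h2 : ((s.ncard : ℕ) : ℝ) ≤
      (((2 * ⌊Real.sqrt (2 * B)⌋₊ + 1) ^ 2 * Fintype.card L : ℕ) : ℝ) := by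
    exact_mod_cast h1
  have hM : ((⌊Real.sqrt (2 * B)⌋₊ : ℕ) : ℝ) ≤ Real.sqrt (2 * B) :=
    Nat.floor_le (Real.sqrt_nonneg _)
  have hs1 : (1 : ℝ) ≤ Real.sqrt (2 * B) := Real.one_le_sqrt.mpr (by linarith)
  have hsq : Real.sqrt (2 * B) ^ 2 = 2 * B := Real.sq_sqrt (by linarith)
  have hcard : (0 : ℝ) ≤ (Fintype.card L : ℝ) := by positivity
  calc ((s.ncard : ℕ) : ℝ) ≤ _ := h2
    _ ≤ 18 * Fintype.card L * B := by
      push_cast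
      have h3 : (2 * (⌊Real.sqrt (2 * B)⌋₊ : ℝ) + 1) ^ 2 ≤ (3 * Real.sqrt (2 * B)) ^ 2 := by
        nlinarith
      have h4 : (3 * Real.sqrt (2 * B)) ^ 2 = 18 * B := by rw [mul_pow, hsq]; ring
      nlinarith

lemma count_THyp {B : ℝ} (hB : 1 ≤ B) : (((THyp B).ncard : ℝ)) ≤ 288 * B := by
  have h := count_real hB (THyp B) FH (fh_inj B) (fun x hx => fh_bounds hB hx)
  have hc : (Fintype.card (Bool × Bool × Bool × Bool) : ℝ) = 16 := by
    simp [Fintype.card_prod]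
  rw [hc] at h
  linarith

lemma count_TEll {B : ℝ} (hB : 1 ≤ B) : (((TEll B).ncard : ℝ)) ≤ 288 * B := by
  have h := count_real hB (TEll B) FE (fe_inj B) (fun x hx => fe_bounds hB hx)
  have hc : (Fintype.card (Bool × Bool × Bool × Bool) : ℝ) = 16 := by
    simp [Fintype.card_prod]
  rw [hc] at h
  linarith

lemma count_TSurf {B : ℝ} (hB : 1 ≤ B) : (((TSurf B).ncard : ℝ)) ≤ 36 * B := by
  have h := count_real hB (TSurf B) FS (fs_inj B) (fun x hx => fs_bounds hB hx)
  have hc : (Fintype.card Bool : ℝ) = 2 := by simp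
  rw [hc] at h
  linarith


/-- The set counted by `NcountU`. -/
def NSet (B : ℝ) : Set (ℤ × ℤ × ℤ × ℤ × ℤ) :=
  {x : ℤ × ℤ × ℤ × ℤ × ℤ |
    Int.gcd x.1 (Int.gcd x.2.1 (Int.gcd x.2.2.1 (Int.gcd x.2.2.2.1 x.2.2.2.2))) = 1 ∧
    x.1 * x.2.1 = x.2.2.1 * x.2.2.2.1 ∧
    x.1 ^ 2 + x.2.1 ^ 2 + x.2.2.1 ^ 2 - x.2.2.2.1 ^ 2 - 2 * x.2.2.2.2 ^ 2 = 0 ∧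
    (|x.1| : ℝ) ≤ B ∧ (|x.2.1| : ℝ) ≤ B ∧ (|x.2.2.1| : ℝ) ≤ B ∧ (|x.2.2.2.1| : ℝ) ≤ B ∧
      Real.sqrt (2 / 3) * (|x.2.2.2.2| : ℝ) ≤ B ∧
    ({|x.1|, |x.2.1|} : Set ℤ) ≠ ({|x.2.2.1|, |x.2.2.2.1|} : Set ℤ)}

/-- The set counted by `None`. -/
def PSet (B : ℝ) : Set (ℤ × ℤ × ℤ × ℤ × ℤ) :=
  {x : ℤ × ℤ × ℤ × ℤ × ℤ |
    0 < x.1 ∧ 0 < x.2.1 ∧ 0 < x.2.2.1 ∧ 0 < x.2.2.2.1 ∧ 0 < x.2.2.2.2 ∧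
    Int.gcd x.1 (Int.gcd x.2.1 (Int.gcd x.2.2.1 x.2.2.2.1)) = 1 ∧
    (x.1 : ℝ) ≤ B ∧ (x.2.1 : ℝ) ≤ B ∧ (x.2.2.1 : ℝ) ≤ B ∧ (x.2.2.2.1 : ℝ) ≤ B ∧
    x.1 * x.2.1 = x.2.2.1 * x.2.2.2.1 ∧
    x.1 ^ 2 + x.2.1 ^ 2 + x.2.2.1 ^ 2 - x.2.2.2.1 ^ 2 - 2 * x.2.2.2.2 ^ 2 = 0 ∧
    ({x.1, x.2.1} : Set ℤ) ≠ ({x.2.2.1, x.2.2.2.1} : Set ℤ)}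

/-- bound on the last coordinate -/
lemma natAbs_cast_real (e : ℤ) : ((e.natAbs : ℕ) : ℝ) = |(e : ℝ)| := by
  rw [Nat.cast_natAbs, Int.cast_abs]

lemma e_bound {B : ℝ} (hB : 1 ≤ B) {e : ℤ} (h : Real.sqrt (2 / 3) * |(e : ℝ)| ≤ B) :
    (e.natAbs : ℝ) ≤ 2 * B := by
  have h23 : (1 : ℝ) / 2 ≤ Real.sqrt (2 / 3) := by
    rw [Real.le_sqrt (by norm_num) (by norm_num)]; norm_num
  rw [natAbs_cast_real]
  have h0 : (0 : ℝ) ≤ |(e : ℝ)| := abs_nonneg _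
  nlinarith

/-- gcd₅ divides gcd₄, so gcd₄ = 1 implies gcd₅ = 1 -/
lemma gcd5_of_gcd4 {a b c d e : ℤ}
    (h : Int.gcd a (Int.gcd b (Int.gcd c d)) = 1) :
    Int.gcd a (Int.gcd b (Int.gcd c (Int.gcd d e))) = 1 := by
  have h5a : (Int.gcd a (Int.gcd b (Int.gcd c (Int.gcd d e))) : ℤ) ∣ a := (Int.gcd_dvd_left _ _)
  have h5r : (Int.gcd a (Int.gcd b (Int.gcd c (Int.gcd d e))) : ℤ) ∣
      ((Int.gcd b (Int.gcd c (Int.gcd d e)) : ℕ) : ℤ) := (Int.gcd_dvd_right _ _)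
  have h5b : (Int.gcd a (Int.gcd b (Int.gcd c (Int.gcd d e))) : ℤ) ∣ b :=
    h5r.trans (Int.gcd_dvd_left _ _)
  have h5c : (Int.gcd a (Int.gcd b (Int.gcd c (Int.gcd d e))) : ℤ) ∣ c :=
    h5r.trans ((Int.gcd_dvd_right _ _).trans (Int.gcd_dvd_left _ _))
  have h5d : (Int.gcd a (Int.gcd b (Int.gcd c (Int.gcd d e))) : ℤ) ∣ d :=
    h5r.trans ((Int.gcd_dvd_right _ _).trans ((Int.gcd_dvd_right _ _).trans (Int.gcd_dvd_left _ _)))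
  have hdvd : (Int.gcd a (Int.gcd b (Int.gcd c (Int.gcd d e))) : ℤ) ∣
      ((Int.gcd a (Int.gcd b (Int.gcd c d)) : ℕ) : ℤ) :=
    Int.dvd_coe_gcd h5a (Int.dvd_coe_gcd h5b (Int.dvd_coe_gcd h5c h5d))
  rw [h] at hdvd
  exact Nat.dvd_one.mp (by exact_mod_cast hdvd)

/-- gcd₅ = 1 together with the equation implies gcd₄ = 1 -/
lemma gcd4_of_gcd5 {a b c d e : ℤ}
    (h5 : Int.gcd a (Int.gcd b (Int.gcd c (Int.gcd d e))) = 1)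
    (heq : a ^ 2 + b ^ 2 + c ^ 2 - d ^ 2 - 2 * e ^ 2 = 0) :
    Int.gcd a (Int.gcd b (Int.gcd c d)) = 1 := by
  set q := Int.gcd a (Int.gcd b (Int.gcd c d)) with hq
  have hqa : (q : ℤ) ∣ a := (Int.gcd_dvd_left _ _)
  have hqr : (q : ℤ) ∣ ((Int.gcd b (Int.gcd c d) : ℕ) : ℤ) := (Int.gcd_dvd_right _ _)
  have hqb : (q : ℤ) ∣ b := hqr.trans (Int.gcd_dvd_left _ _)
  have hqc : (q : ℤ) ∣ c := hqr.trans ((Int.gcd_dvd_right _ _).trans (Int.gcd_dvd_left _ _))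
  have hqd : (q : ℤ) ∣ d := hqr.trans ((Int.gcd_dvd_right _ _).trans (Int.gcd_dvd_right _ _))
  apply coprime_of_sq_dvd_two_mul_sq (e := e)
  · -- Nat.Coprime q e.natAbs
    have h1 : (Nat.gcd q e.natAbs : ℤ) ∣ a :=
      dvd_trans (by exact_mod_cast Nat.gcd_dvd_left q e.natAbs) hqa
    have h2 : (Nat.gcd q e.natAbs : ℤ) ∣ b :=
      dvd_trans (by exact_mod_cast Nat.gcd_dvd_left q e.natAbs) hqb
    have h3 : (Nat.gcd q e.natAbs : ℤ) ∣ c :=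
      dvd_trans (by exact_mod_cast Nat.gcd_dvd_left q e.natAbs) hqc
    have h4 : (Nat.gcd q e.natAbs : ℤ) ∣ d :=
      dvd_trans (by exact_mod_cast Nat.gcd_dvd_left q e.natAbs) hqd
    have h5' : (Nat.gcd q e.natAbs : ℤ) ∣ e := by
      have : (Nat.gcd q e.natAbs : ℤ) ∣ (e.natAbs : ℤ) := by
        exact_mod_cast Nat.gcd_dvd_right q e.natAbs
      simpa [Int.natAbs_dvd] using this
    have hd : (Nat.gcd q e.natAbs : ℤ) ∣
        ((Int.gcd a (Int.gcd b (Int.gcd c (Int.gcd d e))) : ℕ) : ℤ) :=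
      Int.dvd_coe_gcd h1 (Int.dvd_coe_gcd h2 (Int.dvd_coe_gcd h3 (Int.dvd_coe_gcd h4 h5')))
    rw [h5] at hd
    exact Nat.dvd_one.mp (by exact_mod_cast hd)
  · -- q² ∣ 2e²
    have h1 : ((q : ℤ)) ^ 2 ∣ a ^ 2 + b ^ 2 + c ^ 2 - d ^ 2 := by
      have := dvd_sub (dvd_add (dvd_add (pow_dvd_pow_of_dvd hqa 2) (pow_dvd_pow_of_dvd hqb 2))
        (pow_dvd_pow_of_dvd hqc 2)) (pow_dvd_pow_of_dvd hqd 2)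
      exact this
    have h2 : a ^ 2 + b ^ 2 + c ^ 2 - d ^ 2 = 2 * e ^ 2 := by linarith
    rwa [h2] at h1


lemma gcd_natAbs_right (c e : ℤ) : Int.gcd c ((e.natAbs : ℕ) : ℤ) = Int.gcd c e := by
  simp [Int.gcd, Int.natAbs_abs]

lemma abs_ne_of_natAbs_ne {b d : ℤ} (h : ({0, |b|} : Set ℤ) ≠ ({0, |d|} : Set ℤ)) :
    b.natAbs ≠ d.natAbs := by
  intro he
  apply h
  have : |b| = |d| := by
    rw [Int.abs_eq_natAbs, Int.abs_eq_natAbs, he]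
  rw [this]

lemma s1_count {B : ℝ} (hB : 1 ≤ B) :
    (((NSet B ∩ {x | x.1 = 0 ∧ x.2.2.1 = 0}).ncard : ℝ)) ≤ 288 * B := by
  set S := NSet B ∩ {x : ℤ × ℤ × ℤ × ℤ × ℤ | x.1 = 0 ∧ x.2.2.1 = 0} with hS
  have htrans : ∀ x ∈ S, ((x.2.1, x.2.2.2.1, x.2.2.2.2) : ℤ × ℤ × ℤ) ∈ THyp B := by
    rintro ⟨a, b, c, d, e⟩ ⟨⟨hgcd, hab, heq, hba, hbb, hbc, hbd, hbe, hne⟩, ha0, hc0⟩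
    simp only at hgcd hab heq hba hbb hbc hbd hbe hne ha0 hc0
    subst ha0; subst hc0
    dsimp only
    refine ⟨?_, by linarith, ?_, ?_, ?_⟩
    · simp only [Int.gcd_zero_left, Int.gcd_zero_right, Int.natAbs_natCast,
        gcd_natAbs_right] at hgcd
      exact hgcd
    · -- natAbs ne
      have h0 : |(0 : ℤ)| = 0 := abs_zero
      rw [h0] at hne
      exact abs_ne_of_natAbs_ne hne
    · rw [natAbs_cast_real]; exact hbb
    · rw [natAbs_cast_real]; exact hbd
  have hproj : ∀ x ∈ S, ∀ y ∈ S,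
      ((x.2.1, x.2.2.2.1, x.2.2.2.2) : ℤ × ℤ × ℤ) = (y.2.1, y.2.2.2.1, y.2.2.2.2) → x = y := by
    rintro ⟨a, b, c, d, e⟩ ⟨-, ha0, hc0⟩ ⟨a', b', c', d', e'⟩ ⟨-, ha0', hc0'⟩ hp
    simp only at ha0 hc0 ha0' hc0'
    simp only [Prod.mk.injEq] at hp ⊢
    exact ⟨by rw [ha0, ha0'], hp.1, by rw [hc0, hc0'], hp.2.1, hp.2.2⟩
  have h := count_real hB S (fun x => FH (x.2.1, x.2.2.2.1, x.2.2.2.2))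
    (fun x hx y hy hfh => hproj x hx y hy (fh_inj B (htrans x hx) (htrans y hy) hfh))
    (fun x hx => fh_bounds hB (htrans x hx))
  have hc : (Fintype.card (Bool × Bool × Bool × Bool) : ℝ) = 16 := by simp
  rw [hc] at h
  linarith

lemma s3_count {B : ℝ} (hB : 1 ≤ B) :
    (((NSet B ∩ {x | x.2.1 = 0 ∧ x.2.2.1 = 0}).ncard : ℝ)) ≤ 288 * B := by
  set S := NSet B ∩ {x : ℤ × ℤ × ℤ × ℤ × ℤ | x.2.1 = 0 ∧ x.2.2.1 = 0} with hS
  have htrans : ∀ x ∈ S, ((x.1, x.2.2.2.1, x.2.2.2.2) : ℤ × ℤ × ℤ) ∈ THyp B := by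
    rintro ⟨a, b, c, d, e⟩ ⟨⟨hgcd, hab, heq, hba, hbb, hbc, hbd, hbe, hne⟩, hb0, hc0⟩
    simp only at hgcd hab heq hba hbb hbc hbd hbe hne hb0 hc0
    subst hb0; subst hc0
    dsimp only
    refine ⟨?_, by linarith, ?_, ?_, ?_⟩
    · simp only [Int.gcd_zero_left, Int.gcd_zero_right, Int.natAbs_natCast,
        gcd_natAbs_right] at hgcd
      exact hgcd
    · have h0 : |(0 : ℤ)| = 0 := abs_zero
      rw [h0] at hne
      rw [Set.pair_comm |a| (0 : ℤ)] at hne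
      exact abs_ne_of_natAbs_ne hne
    · rw [natAbs_cast_real]; exact hba
    · rw [natAbs_cast_real]; exact hbd
  have hproj : ∀ x ∈ S, ∀ y ∈ S,
      ((x.1, x.2.2.2.1, x.2.2.2.2) : ℤ × ℤ × ℤ) = (y.1, y.2.2.2.1, y.2.2.2.2) → x = y := by
    rintro ⟨a, b, c, d, e⟩ ⟨-, hb0, hc0⟩ ⟨a', b', c', d', e'⟩ ⟨-, hb0', hc0'⟩ hp
    simp only at hb0 hc0 hb0' hc0'
    simp only [Prod.mk.injEq] at hp ⊢
    exact ⟨hp.1, by rw [hb0, hb0'], by rw [hc0, hc0'], hp.2.1, hp.2.2⟩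
  have h := count_real hB S (fun x => FH (x.1, x.2.2.2.1, x.2.2.2.2))
    (fun x hx y hy hfh => hproj x hx y hy (fh_inj B (htrans x hx) (htrans y hy) hfh))
    (fun x hx => fh_bounds hB (htrans x hx))
  have hc : (Fintype.card (Bool × Bool × Bool × Bool) : ℝ) = 16 := by simp
  rw [hc] at h
  linarith

lemma s2_count {B : ℝ} (hB : 1 ≤ B) :
    (((NSet B ∩ {x | x.1 = 0 ∧ x.2.2.2.1 = 0}).ncard : ℝ)) ≤ 288 * B := by
  set S := NSet B ∩ {x : ℤ × ℤ × ℤ × ℤ × ℤ | x.1 = 0 ∧ x.2.2.2.1 = 0} with hS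
  have htrans : ∀ x ∈ S, ((x.2.1, x.2.2.1, x.2.2.2.2) : ℤ × ℤ × ℤ) ∈ TEll B := by
    rintro ⟨a, b, c, d, e⟩ ⟨⟨hgcd, hab, heq, hba, hbb, hbc, hbd, hbe, hne⟩, ha0, hd0⟩
    simp only at hgcd hab heq hba hbb hbc hbd hbe hne ha0 hd0
    subst ha0; subst hd0
    dsimp only
    refine ⟨?_, by linarith, ?_, ?_, ?_⟩
    · simp only [Int.gcd_zero_left, Int.gcd_zero_right, Int.natAbs_natCast,
        gcd_natAbs_right] at hgcd
      exact hgcd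
    · rw [natAbs_cast_real]; exact hbb
    · rw [natAbs_cast_real]; exact hbc
    · exact e_bound hB hbe
  have hproj : ∀ x ∈ S, ∀ y ∈ S,
      ((x.2.1, x.2.2.1, x.2.2.2.2) : ℤ × ℤ × ℤ) = (y.2.1, y.2.2.1, y.2.2.2.2) → x = y := by
    rintro ⟨a, b, c, d, e⟩ ⟨-, ha0, hd0⟩ ⟨a', b', c', d', e'⟩ ⟨-, ha0', hd0'⟩ hp
    simp only at ha0 hd0 ha0' hd0'
    simp only [Prod.mk.injEq] at hp ⊢
    exact ⟨by rw [ha0, ha0'], hp.1, hp.2.1, by rw [hd0, hd0'], hp.2.2⟩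
  have h := count_real hB S (fun x => FE (x.2.1, x.2.2.1, x.2.2.2.2))
    (fun x hx y hy hfe => hproj x hx y hy (fe_inj B (htrans x hx) (htrans y hy) hfe))
    (fun x hx => fe_bounds hB (htrans x hx))
  have hc : (Fintype.card (Bool × Bool × Bool × Bool) : ℝ) = 16 := by simp
  rw [hc] at h
  linarith

lemma s4_count {B : ℝ} (hB : 1 ≤ B) :
    (((NSet B ∩ {x | x.2.1 = 0 ∧ x.2.2.2.1 = 0}).ncard : ℝ)) ≤ 288 * B := by
  set S := NSet B ∩ {x : ℤ × ℤ × ℤ × ℤ × ℤ | x.2.1 = 0 ∧ x.2.2.2.1 = 0} with hS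
  have htrans : ∀ x ∈ S, ((x.1, x.2.2.1, x.2.2.2.2) : ℤ × ℤ × ℤ) ∈ TEll B := by
    rintro ⟨a, b, c, d, e⟩ ⟨⟨hgcd, hab, heq, hba, hbb, hbc, hbd, hbe, hne⟩, hb0, hd0⟩
    simp only at hgcd hab heq hba hbb hbc hbd hbe hne hb0 hd0
    subst hb0; subst hd0
    dsimp only
    refine ⟨?_, by linarith, ?_, ?_, ?_⟩
    · simp only [Int.gcd_zero_left, Int.gcd_zero_right, Int.natAbs_natCast,
        gcd_natAbs_right] at hgcd
      exact hgcd
    · rw [natAbs_cast_real]; exact hba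
    · rw [natAbs_cast_real]; exact hbc
    · exact e_bound hB hbe
  have hproj : ∀ x ∈ S, ∀ y ∈ S,
      ((x.1, x.2.2.1, x.2.2.2.2) : ℤ × ℤ × ℤ) = (y.1, y.2.2.1, y.2.2.2.2) → x = y := by
    rintro ⟨a, b, c, d, e⟩ ⟨-, hb0, hd0⟩ ⟨a', b', c', d', e'⟩ ⟨-, hb0', hd0'⟩ hp
    simp only at hb0 hd0 hb0' hd0'
    simp only [Prod.mk.injEq] at hp ⊢
    exact ⟨hp.1, by rw [hb0, hb0'], hp.2.1, by rw [hd0, hd0'], hp.2.2⟩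
  have h := count_real hB S (fun x => FE (x.1, x.2.2.1, x.2.2.2.2))
    (fun x hx y hy hfe => hproj x hx y hy (fe_inj B (htrans x hx) (htrans y hy) hfe))
    (fun x hx => fe_bounds hB (htrans x hx))
  have hc : (Fintype.card (Bool × Bool × Bool × Bool) : ℝ) = 16 := by simp
  rw [hc] at h
  linarith

lemma s5_count {B : ℝ} (hB : 1 ≤ B) :
    (((NSet B ∩ {x | x.2.2.2.2 = 0 ∧ x.1 ≠ 0 ∧ x.2.1 ≠ 0 ∧ x.2.2.1 ≠ 0 ∧
      x.2.2.2.1 ≠ 0}).ncard : ℝ)) ≤ 36 * B := by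
  set S := NSet B ∩ {x : ℤ × ℤ × ℤ × ℤ × ℤ | x.2.2.2.2 = 0 ∧ x.1 ≠ 0 ∧ x.2.1 ≠ 0 ∧
    x.2.2.1 ≠ 0 ∧ x.2.2.2.1 ≠ 0} with hS
  have htrans : ∀ x ∈ S, ((x.1, x.2.1, x.2.2.1, x.2.2.2.1) : ℤ × ℤ × ℤ × ℤ) ∈ TSurf B := by
    rintro ⟨a, b, c, d, e⟩ ⟨⟨hgcd, hab, heq, hba, hbb, hbc, hbd, hbe, hne⟩,
      he0, ha0, hb0, hc0, hd0⟩
    simp only at hgcd hab heq hba hbb hbc hbd hbe hne he0 ha0 hb0 hc0 hd0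
    subst he0
    dsimp only
    refine ⟨?_, hab, by linarith, ha0, hb0, hc0, hd0, ?_⟩
    · simp only [Int.gcd_zero_left, Int.gcd_zero_right, Int.natAbs_natCast,
        gcd_natAbs_right] at hgcd
      exact hgcd
    · rw [natAbs_cast_real]; exact hbd
  have hproj : ∀ x ∈ S, ∀ y ∈ S,
      ((x.1, x.2.1, x.2.2.1, x.2.2.2.1) : ℤ × ℤ × ℤ × ℤ) =
        (y.1, y.2.1, y.2.2.1, y.2.2.2.1) → x = y := by
    rintro ⟨a, b, c, d, e⟩ ⟨-, he0, -⟩ ⟨a', b', c', d', e'⟩ ⟨-, he0', -⟩ hp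
    simp only at he0 he0'
    simp only [Prod.mk.injEq] at hp ⊢
    exact ⟨hp.1, hp.2.1, hp.2.2.1, hp.2.2.2, by rw [he0, he0']⟩
  have h := count_real hB S (fun x => FS (x.1, x.2.1, x.2.2.1, x.2.2.2.1))
    (fun x hx y hy hfs => hproj x hx y hy (fs_inj B (htrans x hx) (htrans y hy) hfs))
    (fun x hx => fs_bounds hB (htrans x hx))
  have hc : (Fintype.card Bool : ℝ) = 2 := by simp
  rw [hc] at h
  linarith


def ESet : Set (ℤ × ℤ × ℤ × ℤ) :=
  {ε | (ε.1 = 1 ∨ ε.1 = -1) ∧ (ε.2.1 = 1 ∨ ε.2.1 = -1) ∧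
       (ε.2.2.1 = 1 ∨ ε.2.2.1 = -1) ∧ (ε.2.2.2 = 1 ∨ ε.2.2.2 = -1)}

lemma ESet_ncard : ESet.ncard = 16 := by
  have h : ESet = (↑(({1,-1} ×ˢ {1,-1} ×ˢ {1,-1} ×ˢ {1,-1} : Finset (ℤ × ℤ × ℤ × ℤ)))) := by
    ext ⟨e1, e2, e3, e4⟩
    simp [ESet, Finset.mem_product]
  rw [h, Set.ncard_coe_finset]
  decide

def Phi : (ℤ × ℤ × ℤ × ℤ) × (ℤ × ℤ × ℤ × ℤ × ℤ) → ℤ × ℤ × ℤ × ℤ × ℤ := fun p =>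
  (p.1.1 * p.2.1, p.1.2.1 * p.2.2.1, p.1.2.2.1 * p.2.2.2.1,
   p.1.1 * p.1.2.1 * p.1.2.2.1 * p.2.2.2.2.1, p.1.2.2.2 * p.2.2.2.2.2)

def QSet (B : ℝ) : Set (ℤ × ℤ × ℤ × ℤ × ℤ) :=
  NSet B ∩ {x | x.1 ≠ 0 ∧ x.2.1 ≠ 0 ∧ x.2.2.1 ≠ 0 ∧ x.2.2.2.1 ≠ 0 ∧ x.2.2.2.2 ≠ 0}

lemma unit_natAbs {ε x : ℤ} (h : ε = 1 ∨ ε = -1) : (ε * x).natAbs = x.natAbs := by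
  rcases h with rfl | rfl <;> simp

lemma unit_mul {ε δ : ℤ} (h : ε = 1 ∨ ε = -1) (h' : δ = 1 ∨ δ = -1) :
    ε * δ = 1 ∨ ε * δ = -1 := by
  rcases h with rfl | rfl <;> rcases h' with rfl | rfl <;> simp

lemma unit_abs_int {ε x : ℤ} (h : ε = 1 ∨ ε = -1) : |ε * x| = |x| := by
  rcases h with rfl | rfl <;> simp

lemma unit_ne_zero {ε : ℤ} (h : ε = 1 ∨ ε = -1) : ε ≠ 0 := by
  rcases h with rfl | rfl <;> norm_num

lemma unit_abs_le {ε a : ℤ} {B : ℝ} (hε : ε = 1 ∨ ε = -1) (ha : 0 < a)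
    (hB : (a : ℝ) ≤ B) : |((ε * a : ℤ) : ℝ)| ≤ B := by
  have h0 : (0 : ℝ) < (a : ℝ) := by exact_mod_cast ha
  rcases hε with rfl | rfl
  · push_cast
    rw [one_mul, abs_of_pos h0]; exact hB
  · push_cast
    rw [neg_one_mul, abs_neg, abs_of_pos h0]; exact hB

lemma gcd5_congr {a a' b b' c c' d d' e e' : ℤ}
    (ha : a.natAbs = a'.natAbs) (hb : b.natAbs = b'.natAbs) (hc : c.natAbs = c'.natAbs)
    (hd : d.natAbs = d'.natAbs) (he : e.natAbs = e'.natAbs) :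
    Int.gcd a (Int.gcd b (Int.gcd c (Int.gcd d e))) =
      Int.gcd a' (Int.gcd b' (Int.gcd c' (Int.gcd d' e'))) := by
  simp only [Int.gcd, Int.natAbs_natCast, ha, hb, hc, hd, he]

lemma gcd4_congr {a a' b b' c c' d d' : ℤ}
    (ha : a.natAbs = a'.natAbs) (hb : b.natAbs = b'.natAbs) (hc : c.natAbs = c'.natAbs)
    (hd : d.natAbs = d'.natAbs) :
    Int.gcd a (Int.gcd b (Int.gcd c d)) = Int.gcd a' (Int.gcd b' (Int.gcd c' d')) := by
  simp only [Int.gcd, Int.natAbs_natCast, ha, hb, hc, hd]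

lemma sign_pm {y : ℤ} (h : y ≠ 0) : y.sign = 1 ∨ y.sign = -1 := by
  rcases lt_trichotomy y 0 with h' | h' | h'
  · right; rwa [Int.sign_eq_neg_one_iff_neg]
  · omega
  · left; rwa [Int.sign_eq_one_iff_pos]

lemma e_bound_from_eq {a b c d e : ℤ} {B : ℝ} (hB : 0 ≤ B)
    (heq : a ^ 2 + b ^ 2 + c ^ 2 - d ^ 2 - 2 * e ^ 2 = 0)
    (hA : |(a : ℝ)| ≤ B) (hb : |(b : ℝ)| ≤ B) (hc : |(c : ℝ)| ≤ B) :
    Real.sqrt (2 / 3) * |(e : ℝ)| ≤ B := by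
  have hR : (a : ℝ) ^ 2 + (b : ℝ) ^ 2 + (c : ℝ) ^ 2 - (d : ℝ) ^ 2 - 2 * (e : ℝ) ^ 2 = 0 := by
    exact_mod_cast congrArg (fun z : ℤ => (z : ℝ)) heq
  have ha2 : (a : ℝ) ^ 2 ≤ B ^ 2 := by rw [← sq_abs]; nlinarith [abs_nonneg ((a : ℝ))]
  have hb2 : (b : ℝ) ^ 2 ≤ B ^ 2 := by rw [← sq_abs]; nlinarith [abs_nonneg ((b : ℝ))]
  have hc2 : (c : ℝ) ^ 2 ≤ B ^ 2 := by rw [← sq_abs]; nlinarith [abs_nonneg ((c : ℝ))]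
  have he2 : (2 / 3 : ℝ) * (e : ℝ) ^ 2 ≤ B ^ 2 := by nlinarith [sq_nonneg ((d : ℝ))]
  have key : Real.sqrt (2 / 3) * |(e : ℝ)| = Real.sqrt ((2 / 3) * (e : ℝ) ^ 2) := by
    rw [Real.sqrt_mul (by norm_num), Real.sqrt_sq_eq_abs]
  rw [key]
  calc Real.sqrt ((2 / 3) * (e : ℝ) ^ 2) ≤ Real.sqrt (B ^ 2) := Real.sqrt_le_sqrt he2
    _ = B := Real.sqrt_sq hB

lemma unit_pos_cancel {ε δ x y : ℤ} (hε : ε = 1 ∨ ε = -1) (hδ : δ = 1 ∨ δ = -1)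
    (hx : 0 < x) (hy : 0 < y) (h : ε * x = δ * y) : ε = δ ∧ x = y := by
  rcases hε with rfl | rfl <;> rcases hδ with rfl | rfl <;>
    exact ⟨by omega, by omega⟩

lemma phi_bijOn (B : ℝ) (hB : 1 ≤ B) : Set.BijOn Phi (ESet ×ˢ PSet B) (QSet B) := by
  refine ⟨?_, ?_, ?_⟩
  · -- MapsTo
    rintro ⟨⟨e1, e2, e3, e4⟩, ⟨a, b, c, d, e⟩⟩ ⟨⟨he1, he2, he3, he4⟩,
      hpa, hpb, hpc, hpd, hpe, hgcd4, hBa, hBb, hBc, hBd, hab, heq, hne⟩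
    simp only at he1 he2 he3 he4 hpa hpb hpc hpd hpe hgcd4 hBa hBb hBc hBd hab heq hne
    have he123 : e1 * e2 * e3 = 1 ∨ e1 * e2 * e3 = -1 := unit_mul (unit_mul he1 he2) he3
    constructor
    · -- NSet membership
      refine ⟨?_, ?_, ?_, ?_, ?_, ?_, ?_, ?_, ?_⟩
      · -- gcd5
        show Int.gcd (e1 * a) (Int.gcd (e2 * b) (Int.gcd (e3 * c)
          (Int.gcd (e1 * e2 * e3 * d) (e4 * e)))) = 1
        rw [gcd5_congr (unit_natAbs he1) (unit_natAbs he2) (unit_natAbs he3)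
          (unit_natAbs he123) (unit_natAbs he4)]
        exact gcd5_of_gcd4 hgcd4
      · -- product
        show (e1 * a) * (e2 * b) = (e3 * c) * (e1 * e2 * e3 * d)
        rcases he1 with rfl | rfl <;> rcases he2 with rfl | rfl <;>
          rcases he3 with rfl | rfl <;>
          first
            | linear_combination hab
            | linear_combination -hab
      · -- equation
        show (e1 * a) ^ 2 + (e2 * b) ^ 2 + (e3 * c) ^ 2 - (e1 * e2 * e3 * d) ^ 2 -
          2 * (e4 * e) ^ 2 = 0
        rcases he1 with rfl | rfl <;> rcases he2 with rfl | rfl <;>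
          rcases he3 with rfl | rfl <;> rcases he4 with rfl | rfl <;>
          linear_combination heq
      · exact unit_abs_le he1 hpa hBa
      · exact unit_abs_le he2 hpb hBb
      · exact unit_abs_le he3 hpc hBc
      · exact unit_abs_le he123 hpd hBd
      · -- e bound
        show Real.sqrt (2 / 3) * |((e4 * e : ℤ) : ℝ)| ≤ B
        have habs : |((e4 * e : ℤ) : ℝ)| = |(e : ℝ)| := by
          rcases he4 with rfl | rfl <;> push_cast <;> simp [abs_mul]
        rw [habs]
        apply e_bound_from_eq (by linarith) heq
        · have h0 : (0 : ℝ) < (a : ℝ) := by exact_mod_cast hpa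
          rw [abs_of_pos h0]; exact hBa
        · have h0 : (0 : ℝ) < (b : ℝ) := by exact_mod_cast hpb
          rw [abs_of_pos h0]; exact hBb
        · have h0 : (0 : ℝ) < (c : ℝ) := by exact_mod_cast hpc
          rw [abs_of_pos h0]; exact hBc
      · -- ne condition
        show ({|e1 * a|, |e2 * b|} : Set ℤ) ≠ {|e3 * c|, |e1 * e2 * e3 * d|}
        rw [unit_abs_int he1, unit_abs_int he2, unit_abs_int he3, unit_abs_int he123,
          abs_of_pos hpa, abs_of_pos hpb, abs_of_pos hpc, abs_of_pos hpd]
        exact hne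
    · -- nonzero
      exact ⟨mul_ne_zero (unit_ne_zero he1) (ne_of_gt hpa),
        mul_ne_zero (unit_ne_zero he2) (ne_of_gt hpb),
        mul_ne_zero (unit_ne_zero he3) (ne_of_gt hpc),
        mul_ne_zero (unit_ne_zero he123) (ne_of_gt hpd),
        mul_ne_zero (unit_ne_zero he4) (ne_of_gt hpe)⟩
  · -- InjOn
    rintro ⟨⟨e1, e2, e3, e4⟩, ⟨a, b, c, d, e⟩⟩ ⟨⟨he1, he2, he3, he4⟩,
      hpa, hpb, hpc, hpd, hpe, -⟩ ⟨⟨f1, f2, f3, f4⟩, ⟨a', b', c', d', e'⟩⟩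
      ⟨⟨hf1, hf2, hf3, hf4⟩, hqa, hqb, hqc, hqd, hqe, -⟩ hfeq
    simp only at he1 he2 he3 he4 hpa hpb hpc hpd hpe hf1 hf2 hf3 hf4 hqa hqb hqc hqd hqe
    simp only [Phi, Prod.mk.injEq] at hfeq
    obtain ⟨h1, h2, h3, h4, h5⟩ := hfeq
    obtain ⟨g1, ga⟩ := unit_pos_cancel he1 hf1 hpa hqa h1
    obtain ⟨g2, gb⟩ := unit_pos_cancel he2 hf2 hpb hqb h2
    obtain ⟨g3, gc⟩ := unit_pos_cancel he3 hf3 hpc hqc h3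
    obtain ⟨g4, ge⟩ := unit_pos_cancel he4 hf4 hpe hqe h5
    have he123 : e1 * e2 * e3 = 1 ∨ e1 * e2 * e3 = -1 := unit_mul (unit_mul he1 he2) he3
    have hf123 : f1 * f2 * f3 = 1 ∨ f1 * f2 * f3 = -1 := unit_mul (unit_mul hf1 hf2) hf3
    obtain ⟨-, gd⟩ := unit_pos_cancel he123 hf123 hpd hqd h4
    simp only [Prod.mk.injEq]
    exact ⟨⟨g1, g2, g3, g4⟩, ga, gb, gc, gd, ge⟩
  · -- SurjOn
    rintro ⟨y1, y2, y3, y4, y5⟩ ⟨⟨hgcd, hab, heq, hB1, hB2, hB3, hB4, hB5, hne⟩,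
      hn1, hn2, hn3, hn4, hn5⟩
    simp only at hgcd hab heq hB1 hB2 hB3 hB4 hB5 hne hn1 hn2 hn3 hn4 hn5
    have hs1 := sign_pm hn1
    have hs2 := sign_pm hn2
    have hs3 := sign_pm hn3
    have hs4 := sign_pm hn4
    have hs5 := sign_pm hn5
    refine ⟨⟨(y1.sign, y2.sign, y3.sign, y5.sign), (|y1|, |y2|, |y3|, |y4|, |y5|)⟩,
      ⟨⟨hs1, hs2, hs3, hs5⟩, ?_⟩, ?_⟩
    · -- PSet membership
      refine ⟨abs_pos.mpr hn1, abs_pos.mpr hn2, abs_pos.mpr hn3, abs_pos.mpr hn4,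
        abs_pos.mpr hn5, ?_, ?_, ?_, ?_, ?_, ?_, ?_, ?_⟩
      · -- gcd4
        show Int.gcd |y1| (Int.gcd |y2| (Int.gcd |y3| |y4|)) = 1
        rw [gcd4_congr (Int.natAbs_abs y1) (Int.natAbs_abs y2) (Int.natAbs_abs y3)
          (Int.natAbs_abs y4)]
        exact gcd4_of_gcd5 hgcd heq
      · show ((|y1| : ℤ) : ℝ) ≤ B
        rw [Int.cast_abs]; exact hB1
      · show ((|y2| : ℤ) : ℝ) ≤ B
        rw [Int.cast_abs]; exact hB2
      · show ((|y3| : ℤ) : ℝ) ≤ B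
        rw [Int.cast_abs]; exact hB3
      · show ((|y4| : ℤ) : ℝ) ≤ B
        rw [Int.cast_abs]; exact hB4
      · show |y1| * |y2| = |y3| * |y4|
        rw [← abs_mul, ← abs_mul, hab]
      · show |y1| ^ 2 + |y2| ^ 2 + |y3| ^ 2 - |y4| ^ 2 - 2 * |y5| ^ 2 = 0
        rw [sq_abs, sq_abs, sq_abs, sq_abs, sq_abs]; exact heq
      · exact hne
    · -- Phi applied gives y
      have hsgn : y1.sign * y2.sign * y3.sign = y4.sign := by
        have hmul : y1.sign * y2.sign = y3.sign * y4.sign := by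
          rw [← Int.sign_mul, ← Int.sign_mul, hab]
        rcases hs1 with g1 | g1 <;> rcases hs2 with g2 | g2 <;>
          rcases hs3 with g3 | g3 <;> rcases hs4 with g4 | g4 <;>
          rw [g1, g2, g3, g4] at hmul ⊢ <;> omega
      show (y1.sign * |y1|, y2.sign * |y2|, y3.sign * |y3|,
        y1.sign * y2.sign * y3.sign * |y4|, y5.sign * |y5|) = (y1, y2, y3, y4, y5)
      rw [hsgn, Int.sign_mul_abs, Int.sign_mul_abs, Int.sign_mul_abs,
        Int.sign_mul_abs, Int.sign_mul_abs]


lemma nset_finite {B : ℝ} (hB : 1 ≤ B) : (NSet B).Finite := by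
  set K : ℕ := ⌈2 * B⌉₊ with hK
  have hsub : NSet B ⊆ Set.Icc ((-(K : ℤ), -(K : ℤ), -(K : ℤ), -(K : ℤ), -(K : ℤ)) :
      ℤ × ℤ × ℤ × ℤ × ℤ) ((K : ℤ), (K : ℤ), (K : ℤ), (K : ℤ), (K : ℤ)) := by
    rintro ⟨a, b, c, d, e⟩ ⟨-, -, heq, hBa, hBb, hBc, hBd, hBe, -⟩
    simp only at heq hBa hBb hBc hBd hBe
    have hcB : (2 * B) ≤ (K : ℝ) := Nat.le_ceil _
    have key : ∀ z : ℤ, |(z : ℝ)| ≤ 2 * B → -(K : ℤ) ≤ z ∧ z ≤ K := by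
      intro z hz
      have h1 : (z.natAbs : ℝ) ≤ (K : ℝ) := by rw [natAbs_cast_real]; linarith
      have h2 : z.natAbs ≤ K := by exact_mod_cast h1
      omega
    have ha := key a (by linarith [abs_nonneg ((a:ℝ))])
    have hb := key b (by linarith)
    have hc := key c (by linarith)
    have hd := key d (by linarith)
    have he' : (e.natAbs : ℝ) ≤ 2 * B := e_bound hB hBe
    have he2 : e.natAbs ≤ K := by
      have : (e.natAbs : ℝ) ≤ (K : ℝ) := by linarith [Nat.le_ceil (2*B)]
      exact_mod_cast this
    simp only [Set.mem_Icc, Prod.le_def]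
    refine ⟨⟨ha.1, hb.1, hc.1, hd.1, by omega⟩, ⟨ha.2, hb.2, hc.2, hd.2, by omega⟩⟩
  exact Set.Finite.subset (Set.finite_Icc _ _) hsub

lemma qset_ncard {B : ℝ} (hB : 1 ≤ B) : (QSet B).ncard = 16 * (PSet B).ncard := by
  have hbij := phi_bijOn B hB
  rw [← hbij.image_eq, Set.ncard_image_of_injOn hbij.injOn, ncard_prod, ESet_ncard]

def ZSet (B : ℝ) : Set (ℤ × ℤ × ℤ × ℤ × ℤ) :=
  NSet B ∩ {x | ¬(x.1 ≠ 0 ∧ x.2.1 ≠ 0 ∧ x.2.2.1 ≠ 0 ∧ x.2.2.2.1 ≠ 0 ∧ x.2.2.2.2 ≠ 0)}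

lemma nset_split {B : ℝ} (hB : 1 ≤ B) :
    (NSet B).ncard = (QSet B).ncard + (ZSet B).ncard := by
  have hunion : NSet B = QSet B ∪ ZSet B := by
    ext x
    simp only [QSet, ZSet, Set.mem_union, Set.mem_inter_iff, Set.mem_setOf_eq]
    tauto
  have hdisj : Disjoint (QSet B) (ZSet B) := by
    rw [Set.disjoint_left]
    rintro x ⟨-, hq⟩ ⟨-, hz⟩
    exact hz hq
  rw [hunion]
  exact Set.ncard_union_eq hdisj
    ((nset_finite hB).subset (Set.inter_subset_left))
    ((nset_finite hB).subset (Set.inter_subset_left))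

lemma zset_subset (B : ℝ) :
    ZSet B ⊆ (NSet B ∩ {x | x.1 = 0 ∧ x.2.2.1 = 0}) ∪
      (NSet B ∩ {x | x.1 = 0 ∧ x.2.2.2.1 = 0}) ∪
      (NSet B ∩ {x | x.2.1 = 0 ∧ x.2.2.1 = 0}) ∪
      (NSet B ∩ {x | x.2.1 = 0 ∧ x.2.2.2.1 = 0}) ∪
      (NSet B ∩ {x | x.2.2.2.2 = 0 ∧ x.1 ≠ 0 ∧ x.2.1 ≠ 0 ∧ x.2.2.1 ≠ 0 ∧
        x.2.2.2.1 ≠ 0}) := by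
  rintro ⟨a, b, c, d, e⟩ ⟨hN, hz⟩
  simp only [Set.mem_setOf_eq] at hz
  have hab : a * b = c * d := hN.2.1
  simp only [Set.mem_union, Set.mem_inter_iff, Set.mem_setOf_eq]
  by_cases ha : a = 0
  · rcases mul_eq_zero.mp (show c * d = 0 by rw [← hab, ha, zero_mul]) with hc | hd
    · exact Or.inl (Or.inl (Or.inl (Or.inl ⟨hN, ha, hc⟩)))
    · exact Or.inl (Or.inl (Or.inl (Or.inr ⟨hN, ha, hd⟩)))
  by_cases hb : b = 0
  · rcases mul_eq_zero.mp (show c * d = 0 by rw [← hab, hb, mul_zero]) with hc | hd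
    · exact Or.inl (Or.inl (Or.inr ⟨hN, hb, hc⟩))
    · exact Or.inl (Or.inr ⟨hN, hb, hd⟩)
  by_cases hc : c = 0
  · exfalso
    rcases mul_eq_zero.mp (show a * b = 0 by rw [hab, hc, zero_mul]) with h | h
    · exact ha h
    · exact hb h
  by_cases hd : d = 0
  · exfalso
    rcases mul_eq_zero.mp (show a * b = 0 by rw [hab, hd, mul_zero]) with h | h
    · exact ha h
    · exact hb h
  have he : e = 0 := by tauto
  exact Or.inr ⟨hN, he, ha, hb, hc, hd⟩

lemma zset_count {B : ℝ} (hB : 1 ≤ B) : ((ZSet B).ncard : ℝ) ≤ 1200 * B := by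
  set S1 := NSet B ∩ {x : ℤ × ℤ × ℤ × ℤ × ℤ | x.1 = 0 ∧ x.2.2.1 = 0}
  set S2 := NSet B ∩ {x : ℤ × ℤ × ℤ × ℤ × ℤ | x.1 = 0 ∧ x.2.2.2.1 = 0}
  set S3 := NSet B ∩ {x : ℤ × ℤ × ℤ × ℤ × ℤ | x.2.1 = 0 ∧ x.2.2.1 = 0}
  set S4 := NSet B ∩ {x : ℤ × ℤ × ℤ × ℤ × ℤ | x.2.1 = 0 ∧ x.2.2.2.1 = 0}
  set S5 := NSet B ∩ {x : ℤ × ℤ × ℤ × ℤ × ℤ | x.2.2.2.2 = 0 ∧ x.1 ≠ 0 ∧ x.2.1 ≠ 0 ∧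
    x.2.2.1 ≠ 0 ∧ x.2.2.2.1 ≠ 0}
  have hsub := zset_subset B
  have hfin : (S1 ∪ S2 ∪ S3 ∪ S4 ∪ S5).Finite := by
    apply (nset_finite hB).subset
    intro x hx
    simp only [Set.mem_union] at hx
    rcases hx with (((h | h) | h) | h) | h <;> exact h.1
  have h0 : (ZSet B).ncard ≤ (S1 ∪ S2 ∪ S3 ∪ S4 ∪ S5).ncard :=
    Set.ncard_le_ncard hsub hfin
  have h1 : (S1 ∪ S2 ∪ S3 ∪ S4 ∪ S5).ncard ≤
      S1.ncard + S2.ncard + S3.ncard + S4.ncard + S5.ncard := by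
    calc (S1 ∪ S2 ∪ S3 ∪ S4 ∪ S5).ncard
        ≤ (S1 ∪ S2 ∪ S3 ∪ S4).ncard + S5.ncard := Set.ncard_union_le _ _
      _ ≤ (S1 ∪ S2 ∪ S3).ncard + S4.ncard + S5.ncard := by
          linarith [Set.ncard_union_le (S1 ∪ S2 ∪ S3) S4]
      _ ≤ (S1 ∪ S2).ncard + S3.ncard + S4.ncard + S5.ncard := by
          linarith [Set.ncard_union_le (S1 ∪ S2) S3]
      _ ≤ S1.ncard + S2.ncard + S3.ncard + S4.ncard + S5.ncard := by
          linarith [Set.ncard_union_le S1 S2]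
  have hc1 := s1_count hB
  have hc2 := s2_count hB
  have hc3 := s3_count hB
  have hc4 := s4_count hB
  have hc5 := s5_count hB
  have hcast : ((ZSet B).ncard : ℝ) ≤
      (S1.ncard : ℝ) + S2.ncard + S3.ncard + S4.ncard + S5.ncard := by
    have : (ZSet B).ncard ≤ S1.ncard + S2.ncard + S3.ncard + S4.ncard + S5.ncard := by
      omega
    exact_mod_cast this
  calc ((ZSet B).ncard : ℝ) ≤ _ := hcast
    _ ≤ 288 * B + 288 * B + 288 * B + 288 * B + 36 * B := by
        gcongr <;> assumption
    _ ≤ 1200 * B := by linarith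

end NNN

theorem NcountU_eq_sixteen_None :
    ∃ C : ℝ, 0 < C ∧ ∀ B : ℝ, 1 ≤ B →
      |(NcountU B : ℝ) - 16 * (None B : ℝ)| ≤ C * B := by
  refine ⟨1200, by norm_num, fun B hB => ?_⟩
  have hN : NcountU B = (NNN.NSet B).ncard := rfl
  have hP : None B = (NNN.PSet B).ncard := rfl
  rw [hN, hP, NNN.nset_split hB, NNN.qset_ncard hB]
  have heq : ((16 * (NNN.PSet B).ncard + (NNN.ZSet B).ncard : ℕ) : ℝ) -
      16 * ((NNN.PSet B).ncard : ℝ) = ((NNN.ZSet B).ncard : ℝ) := by push_cast; ring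
  rw [heq, abs_of_nonneg (by positivity)]
  exact NNN.zset_count hB
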